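/- arXiv:1103.4019 — 8 statements merged into one kernel-verified Lean document; each statement's English description precedes it below -/
import Mathlib

section
/- Let X be a set with a finite cover S and let Γ be a curve family in X. For all exponents 1 ≤ p ≤ q and every ε > 0, the combinatorial moduli satisfy mod_q(Γ,S) ≤ (ε^{q−p} + ε^{−p} · sup_{s∈S} mod_q(Γ(s),S)) · mod_p(Γ,S), where Γ(s) = {γ ∈ Γ : γ ∩ s ≠ ∅}. -/
open scoped ENNReal
open Set

attribute [local instance] Classical.propDecidable

namespace CombModFin

variable {X : Type*}

/-- The `ρ`-length of a set `K`: the sum of `ρ s` over the elements `s` of the cover `S`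
    meeting `K`. -/
noncomputable def len (S : Finset (Set X)) (ρ : Set X → ℝ≥0∞) (K : Set X) : ℝ≥0∞ :=
  ∑ s ∈ S.filter fun s => (s ∩ K).Nonempty, ρ s

/-- `L_ρ(Γ,S)`: the infimum of the `ρ`-lengths of the curves of `Γ`. -/
noncomputable def Lmin (S : Finset (Set X)) (ρ : Set X → ℝ≥0∞) (Γ : Set (Set X)) : ℝ≥0∞ :=
  ⨅ γ ∈ Γ, len S ρ γ

/-- `V_p(ρ)`: the `p`-volume of the admissible metric `ρ`. -/
noncomputable def vol (S : Finset (Set X)) (ρ : Set X → ℝ≥0∞) (p : ℝ) : ℝ≥0∞ :=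
  ∑ s ∈ S, ρ s ^ p

/-- An admissible metric: a function `ρ : S → [0,∞)` which is not identically zero on `S`. -/
def Admissible (S : Finset (Set X)) (ρ : Set X → ℝ≥0∞) : Prop :=
  (∀ s ∈ S, ρ s ≠ ∞) ∧ ∃ s ∈ S, ρ s ≠ 0

/-- `mod_p(Γ,ρ,S) = V_p(ρ) / L_ρ(Γ,S)^p`. -/
noncomputable def modWith (S : Finset (Set X)) (Γ : Set (Set X)) (ρ : Set X → ℝ≥0∞)
    (p : ℝ) : ℝ≥0∞ :=
  vol S ρ p / Lmin S ρ Γ ^ p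

/-- The combinatorial `p`-modulus: the infimum of `mod_p(Γ,ρ,S)` over admissible metrics `ρ`. -/
noncomputable def cmod (S : Finset (Set X)) (Γ : Set (Set X)) (p : ℝ) : ℝ≥0∞ :=
  ⨅ (ρ : Set X → ℝ≥0∞) (_ : Admissible S ρ), modWith S Γ ρ p


/- ### Auxiliary lemmas -/

lemma len_ne_top {S : Finset (Set X)} {ρ : Set X → ℝ≥0∞} (hρ : ∀ s ∈ S, ρ s ≠ ∞)
    (K : Set X) : len S ρ K ≠ ∞ := by
  refine (ENNReal.sum_lt_top.2 fun s hs => ?_).ne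
  exact (hρ s (Finset.mem_filter.1 hs).1).lt_top

lemma len_mono {S : Finset (Set X)} {ρ ρ' : Set X → ℝ≥0∞} (h : ∀ s ∈ S, ρ s ≤ ρ' s)
    (K : Set X) : len S ρ K ≤ len S ρ' K :=
  Finset.sum_le_sum fun s hs => h s (Finset.mem_filter.1 hs).1

lemma len_mono' {S : Finset (Set X)} {ρ ρ' : Set X → ℝ≥0∞} {K : Set X}
    (h : ∀ s ∈ S, (s ∩ K).Nonempty → ρ s ≤ ρ' s) : len S ρ K ≤ len S ρ' K :=
  Finset.sum_le_sum fun s hs => h s (Finset.mem_filter.1 hs).1 (Finset.mem_filter.1 hs).2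

lemma len_smul (S : Finset (Set X)) (ρ : Set X → ℝ≥0∞) (c : ℝ≥0∞) (K : Set X) :
    len S (fun t => ρ t * c) K = len S ρ K * c := by
  simp [len, Finset.sum_mul]

lemma vol_smul (S : Finset (Set X)) (ρ : Set X → ℝ≥0∞) (c : ℝ≥0∞) {r : ℝ} (hr : 0 ≤ r) :
    vol S (fun t => ρ t * c) r = vol S ρ r * c ^ r := by
  simp [vol, ENNReal.mul_rpow_of_nonneg _ _ hr, Finset.sum_mul]

lemma cmod_le {S : Finset (Set X)} {Γ : Set (Set X)} {ρ : Set X → ℝ≥0∞}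
    (hρ : Admissible S ρ) (p : ℝ) : cmod S Γ p ≤ modWith S Γ ρ p :=
  iInf₂_le ρ hρ

lemma Lmin_le {S : Finset (Set X)} {Γ : Set (Set X)} (ρ : Set X → ℝ≥0∞) {γ : Set X}
    (hγ : γ ∈ Γ) : Lmin S ρ Γ ≤ len S ρ γ :=
  iInf₂_le γ hγ

lemma vol_ne_zero {S : Finset (Set X)} {ρ : Set X → ℝ≥0∞} (hρ : Admissible S ρ)
    {r : ℝ} (hr : 0 < r) : vol S ρ r ≠ 0 := by
  obtain ⟨s, hsS, hs⟩ := hρ.2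
  intro h
  rw [vol, Finset.sum_eq_zero_iff] at h
  exact hs (by simpa [ENNReal.rpow_eq_zero_iff_of_pos hr] using h s hsS)

lemma vol_ne_top {S : Finset (Set X)} {ρ : Set X → ℝ≥0∞} (hρ : ∀ s ∈ S, ρ s ≠ ∞)
    {r : ℝ} (hr : 0 ≤ r) : vol S ρ r ≠ ∞ := by
  refine (ENNReal.sum_lt_top.2 fun s hs => ?_).ne
  exact (ENNReal.rpow_ne_top_of_nonneg hr (hρ s hs)).lt_top

/-- If every curve has `ρ`-length at least 1, the modulus is bounded by the volume. -/
lemma modWith_le_vol {S : Finset (Set X)} {Γ : Set (Set X)} {ρ : Set X → ℝ≥0∞}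
    (h : ∀ γ ∈ Γ, 1 ≤ len S ρ γ) {r : ℝ} (hr : 0 < r) :
    modWith S Γ ρ r ≤ vol S ρ r := by
  have h1 : (1 : ℝ≥0∞) ≤ Lmin S ρ Γ := le_iInf₂ h
  have h2 : (1 : ℝ≥0∞) ≤ Lmin S ρ Γ ^ r := ENNReal.one_le_rpow h1 hr
  calc modWith S Γ ρ r = vol S ρ r * (Lmin S ρ Γ ^ r)⁻¹ := by
        rw [modWith, div_eq_mul_inv]
    _ ≤ vol S ρ r * 1 := mul_le_mul_right (ENNReal.inv_le_one.2 h2) _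
    _ = vol S ρ r := mul_one _

/-- helper: `a * (x / (a+1)) ≤ x` in `ℝ≥0∞` for `a ≠ ∞`. -/
lemma mul_div_add_one_le (a x : ℝ≥0∞) (ha : a ≠ ∞) : a * (x / (a + 1)) ≤ x := by
  have h1 : a + 1 ≠ 0 := by simp
  have h2 : a + 1 ≠ ∞ := by simp [ha]
  calc a * (x / (a + 1)) ≤ (a + 1) * (x / (a + 1)) :=
        mul_le_mul_left (le_add_right le_rfl) _
    _ = x := ENNReal.mul_div_cancel h1 h2


lemma key (S : Finset (Set X)) (Γ : Set (Set X)) (hΓne : Γ.Nonempty)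
    (p q : ℝ) (hp : 1 ≤ p) (hpq : p ≤ q)
    (ε : ℝ≥0∞) (hε : 0 < ε) (hε' : ε ≠ ∞)
    (δ : ℝ≥0∞) (hδ : 0 < δ) (hδ' : δ ≠ ∞)
    (hM : (⨆ s ∈ S, cmod S {γ ∈ Γ | (γ ∩ s).Nonempty} q) ≠ ∞)
    (ρ : Set X → ℝ≥0∞) (hρ : Admissible S ρ) :
    cmod S Γ q ≤
      (ε ^ (q - p) + ε⁻¹ ^ p * ((⨆ s ∈ S, cmod S {γ ∈ Γ | (γ ∩ s).Nonempty} q) + δ)) *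
        modWith S Γ ρ p := by
  set M := ⨆ s ∈ S, cmod S {γ ∈ Γ | (γ ∩ s).Nonempty} q with hMdef
  have hp0 : (0 : ℝ) < p := lt_of_lt_of_le one_pos hp
  have hq0 : (0 : ℝ) < q := lt_of_lt_of_le hp0 hpq
  have hqp0 : (0 : ℝ) ≤ q - p := by linarith
  have hε0 : ε ≠ 0 := hε.ne'
  have hc1_ne0 : ε ^ (q - p) ≠ 0 := by
    simp [ENNReal.rpow_eq_zero_iff, hε0, hε', not_lt.2 hqp0]
  set m := modWith S Γ ρ p with hmdef
  by_cases hm : m = ∞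
  · rw [hm, ENNReal.mul_top (by simp [hc1_ne0])]
    exact le_top
  -- basic facts about ρ
  have hV0 : vol S ρ p ≠ 0 := vol_ne_zero hρ hp0
  set L := Lmin S ρ Γ with hLdef
  have hL0 : L ≠ 0 := by
    intro hL
    rw [hmdef, modWith, ← hLdef, hL, ENNReal.zero_rpow_of_pos hp0,
      ENNReal.div_zero hV0] at hm
    exact hm rfl
  have hLtop : L ≠ ∞ := by
    obtain ⟨γ, hγ⟩ := hΓne
    exact ne_top_of_le_ne_top (len_ne_top hρ.1 γ) (Lmin_le ρ hγ)
  set ρ₁ : Set X → ℝ≥0∞ := fun t => ρ t * L⁻¹ with hρ₁def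
  have hρ₁fin : ∀ t ∈ S, ρ₁ t ≠ ∞ := fun t ht =>
    ENNReal.mul_ne_top (hρ.1 t ht) (ENNReal.inv_ne_top.2 hL0)
  have hlen1 : ∀ γ ∈ Γ, 1 ≤ len S ρ₁ γ := by
    intro γ hγ
    rw [hρ₁def, len_smul]
    calc (1 : ℝ≥0∞) = L * L⁻¹ := (ENNReal.mul_inv_cancel hL0 hLtop).symm
      _ ≤ len S ρ γ * L⁻¹ := mul_le_mul_left (Lmin_le ρ hγ) _
  have hvol₁ : vol S ρ₁ p = m := by
    rw [hρ₁def, vol_smul S ρ L⁻¹ hp0.le, hmdef, modWith, ← hLdef, div_eq_mul_inv,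
      ENNReal.inv_rpow]
  -- the big pieces
  set A := S.filter (fun s => ε ≤ ρ₁ s) with hAdef
  have hAS : A ⊆ S := Finset.filter_subset _ _
  have hεp_ne0 : ε ^ p ≠ 0 := by simp [ENNReal.rpow_eq_zero_iff, hε0, hε', not_lt.2 hp0.le]
  have hεp_netop : ε ^ p ≠ ∞ := ENNReal.rpow_ne_top_of_nonneg hp0.le hε'
  have hcard : (A.card : ℝ≥0∞) * ε ^ p ≤ m := by
    calc (A.card : ℝ≥0∞) * ε ^ p = ∑ _s ∈ A, ε ^ p := by
          rw [Finset.sum_const, nsmul_eq_mul]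
      _ ≤ ∑ s ∈ A, ρ₁ s ^ p := Finset.sum_le_sum fun s hs =>
          ENNReal.rpow_le_rpow (Finset.mem_filter.1 hs).2 hp0.le
      _ ≤ ∑ s ∈ S, ρ₁ s ^ p := Finset.sum_le_sum_of_subset hAS
      _ = m := hvol₁
  have hcard' : (A.card : ℝ≥0∞) ≤ ε⁻¹ ^ p * m := by
    rw [ENNReal.inv_rpow, ← ENNReal.div_eq_inv_mul]
    exact (ENNReal.le_div_iff_mul_le (Or.inl hεp_ne0) (Or.inl hεp_netop)).2 hcard
  -- choose near-optimal metrics for the curve families through the big pieces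
  have hMδtop : M + δ ≠ ∞ := by
    simp [ENNReal.add_ne_top, hM, hδ']
  have hsel : ∀ s : Set X, ∃ g : Set X → ℝ≥0∞,
      s ∈ A → ((∀ γ ∈ Γ, (γ ∩ s).Nonempty → 1 ≤ len S g γ) ∧
        vol S g q ≤ M + δ ∧ ∀ t ∈ S, g t ≠ ∞) := by
    intro s
    by_cases hs : s ∈ A
    swap
    · exact ⟨fun _ => 0, fun h => absurd h hs⟩
    have hsS : s ∈ S := hAS hs
    have hcs : cmod S {γ ∈ Γ | (γ ∩ s).Nonempty} q ≤ M := by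
      rw [hMdef]
      exact le_biSup (fun s => cmod S {γ ∈ Γ | (γ ∩ s).Nonempty} q) hsS
    have hlt : cmod S {γ ∈ Γ | (γ ∩ s).Nonempty} q < M + δ :=
      lt_of_le_of_lt hcs (ENNReal.lt_add_right hM hδ.ne')
    rw [cmod, iInf_lt_iff] at hlt
    obtain ⟨τ, hlt⟩ := hlt
    rw [iInf_lt_iff] at hlt
    obtain ⟨hτadm, hτlt⟩ := hlt
    set Lτ := Lmin S τ {γ ∈ Γ | (γ ∩ s).Nonempty} with hLτdef
    have hLτ0 : Lτ ≠ 0 := by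
      intro hLτ
      rw [modWith, ← hLτdef, hLτ, ENNReal.zero_rpow_of_pos hq0,
        ENNReal.div_zero (vol_ne_zero hτadm hq0)] at hτlt
      exact absurd hτlt (by simp [hMδtop])
    by_cases hLτtop : Lτ = ∞
    · refine ⟨fun _ => 0, fun _ => ⟨?_, ?_, ?_⟩⟩
      · intro γ hγ hint
        exfalso
        have hmem : γ ∈ {γ ∈ Γ | (γ ∩ s).Nonempty} := ⟨hγ, hint⟩
        have := Lmin_le (S := S) (Γ := {γ ∈ Γ | (γ ∩ s).Nonempty}) τ hmem
        rw [← hLτdef, hLτtop] at this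
        exact (len_ne_top hτadm.1 γ) (top_le_iff.1 this)
      · simp [vol, ENNReal.zero_rpow_of_pos hq0]
      · simp
    refine ⟨fun t => τ t * Lτ⁻¹, fun _ => ⟨?_, ?_, ?_⟩⟩
    · intro γ hγ hint
      have hmem : γ ∈ {γ ∈ Γ | (γ ∩ s).Nonempty} := ⟨hγ, hint⟩
      rw [len_smul]
      calc (1 : ℝ≥0∞) = Lτ * Lτ⁻¹ := (ENNReal.mul_inv_cancel hLτ0 hLτtop).symm
        _ ≤ len S τ γ * Lτ⁻¹ := mul_le_mul_left (Lmin_le τ hmem) _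
    · rw [vol_smul S τ Lτ⁻¹ hq0.le, ENNReal.inv_rpow, ← div_eq_mul_inv]
      exact le_of_lt (by rw [modWith, ← hLτdef] at hτlt; exact hτlt)
    · exact fun t ht => ENNReal.mul_ne_top (hτadm.1 t ht) (ENNReal.inv_ne_top.2 hLτ0)
  choose g hg using hsel
  -- the new metric
  set σf : Set X → ℝ≥0∞ := fun t => ε ^ (1 - p / q) * ρ₁ t ^ (p / q) with hσdef
  set τf : Set X → ℝ≥0∞ := fun t => max (σf t) (A.sup fun s => g s t) with hτdef
  have hexp_ne0 : ε ^ (1 - p / q) ≠ 0 := by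
    simp [ENNReal.rpow_eq_zero_iff, hε0, hε']
  have hexp_netop : ε ^ (1 - p / q) ≠ ∞ := by
    simp [ENNReal.rpow_eq_top_iff, hε0, hε']
  have hpq1 : p / q ≤ 1 := by
    rw [div_le_one hq0]; exact hpq
  have hpq0 : 0 < p / q := div_pos hp0 hq0
  -- pointwise lower bound on σf for small pieces
  have hσ_ge : ∀ t, ρ₁ t ≤ ε → ρ₁ t ≤ σf t := by
    intro t ht
    by_cases ht0 : ρ₁ t = 0
    · simp [hσdef, ht0]
    have httop : ρ₁ t ≠ ∞ := ne_top_of_le_ne_top hε' ht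
    have h1 : ρ₁ t ^ (1 - p / q) ≤ ε ^ (1 - p / q) :=
      ENNReal.rpow_le_rpow ht (by linarith)
    have h2 : (ε ^ (1 - p / q))⁻¹ ≤ (ρ₁ t ^ (1 - p / q))⁻¹ :=
      ENNReal.inv_le_inv' h1
    have h3 : (ρ₁ t ^ (1 - p / q))⁻¹ * ρ₁ t = ρ₁ t ^ (p / q) := by
      rw [← ENNReal.rpow_neg]
      nth_rewrite 2 [← ENNReal.rpow_one (ρ₁ t)]
      rw [← ENNReal.rpow_add _ _ ht0 httop]
      congr 1
      ring
    calc ρ₁ t = ε ^ (1 - p / q) * ((ε ^ (1 - p / q))⁻¹ * ρ₁ t) := by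
          rw [← mul_assoc, ENNReal.mul_inv_cancel hexp_ne0 hexp_netop, one_mul]
      _ ≤ ε ^ (1 - p / q) * ((ρ₁ t ^ (1 - p / q))⁻¹ * ρ₁ t) :=
          mul_le_mul_right (mul_le_mul_left h2 _) _
      _ = σf t := by rw [hσdef]; rw [h3]
  -- τf is admissible
  have hτfin : ∀ t ∈ S, τf t ≠ ∞ := by
    intro t ht
    rw [hτdef]
    simp only [ne_eq, max_eq_top, not_or]
    constructor
    · exact fun h => (ENNReal.mul_eq_top.1 h).elim
        (fun ⟨_, h2⟩ => (ENNReal.rpow_ne_top_of_nonneg hpq0.le (hρ₁fin t ht)) h2)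
        (fun ⟨h1, _⟩ => hexp_netop h1)
    · have hlt : A.sup (fun s => g s t) < ∞ :=
        (Finset.sup_lt_iff (by simp : (⊥ : ℝ≥0∞) < ∞)).2
          fun s hs => ((hg s hs).2.2 t ht).lt_top
      exact hlt.ne
  have hτadm : Admissible S τf := by
    refine ⟨hτfin, ?_⟩
    obtain ⟨s₀, hs₀S, hs₀⟩ := hρ.2
    have hρ₁0 : ρ₁ s₀ ≠ 0 := by
      simp [hρ₁def, hs₀, ENNReal.inv_ne_zero.2 hLtop]
    have hσ0 : σf s₀ ≠ 0 := by
      simp only [hσdef]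
      intro h
      rcases mul_eq_zero.mp h with h | h
      · exact hexp_ne0 h
      · exact (by simp [ENNReal.rpow_eq_zero_iff, hρ₁0, hρ₁fin s₀ hs₀S] :
          ρ₁ s₀ ^ (p / q) ≠ 0) h
    refine ⟨s₀, hs₀S, fun h0 => hσ0 (le_zero_iff.1 ?_)⟩
    rw [← h0]
    simp only [hτdef]
    exact le_max_left _ _
  have hτlen : ∀ γ ∈ Γ, 1 ≤ len S τf γ := by
    intro γ hγ
    by_cases hA : ∃ s ∈ A, (γ ∩ s).Nonempty
    · obtain ⟨s, hsA, hint⟩ := hA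
      have h1 : 1 ≤ len S (g s) γ := (hg s hsA).1 γ hγ hint
      refine h1.trans (len_mono (fun t ht => ?_) γ)
      calc g s t ≤ A.sup (fun s' => g s' t) := Finset.le_sup (f := fun s' => g s' t) hsA
        _ ≤ τf t := by simp only [hτdef]; exact le_max_right _ _
    · push_neg at hA
      refine (hlen1 γ hγ).trans (len_mono' fun t ht hint => ?_)
      have htA : t ∉ A := by
        intro h
        have h1 : (γ ∩ t).Nonempty := by rwa [inter_comm] at hint
        rw [hA t h] at h1
        exact Set.not_nonempty_empty h1
      have htε : ρ₁ t ≤ ε := by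
        by_contra hgt
        exact htA (Finset.mem_filter.2 ⟨ht, (not_le.1 hgt).le⟩)
      calc ρ₁ t ≤ σf t := hσ_ge t htε
        _ ≤ τf t := by simp only [hτdef]; exact le_max_left _ _
  have hsupq : ∀ t, (A.sup fun s => g s t) ^ q ≤ ∑ s ∈ A, g s t ^ q := by
    intro t
    rcases A.eq_empty_or_nonempty with hAe | hAne
    · simp [hAe, ENNReal.zero_rpow_of_pos hq0]
    · obtain ⟨s, hs, hval⟩ := Finset.exists_mem_eq_sup A hAne (fun s => g s t)
      rw [hval]
      exact Finset.single_le_sum (f := fun s => g s t ^ q) (fun i _ => zero_le) hs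
  have hterm : ∀ t, τf t ^ q ≤ σf t ^ q + ∑ s ∈ A, g s t ^ q := by
    intro t
    have hmax : τf t ^ q ≤ max (σf t ^ q) ((A.sup fun s => g s t) ^ q) := by
      simp only [hτdef]
      rcases le_total (σf t) (A.sup fun s => g s t) with h | h
      · rw [max_eq_right h]; exact le_max_right _ _
      · rw [max_eq_left h]; exact le_max_left _ _
    exact hmax.trans (max_le (le_add_right le_rfl) (le_add_left (hsupq t)))
  have hvolτ : vol S τf q ≤ vol S σf q + ∑ s ∈ A, vol S (g s) q := by
    calc vol S τf q ≤ ∑ t ∈ S, (σf t ^ q + ∑ s ∈ A, g s t ^ q) :=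
          Finset.sum_le_sum fun t _ => hterm t
      _ = vol S σf q + ∑ t ∈ S, ∑ s ∈ A, g s t ^ q := by
          simp only [vol]
          rw [Finset.sum_add_distrib]
      _ = vol S σf q + ∑ s ∈ A, vol S (g s) q := by
          simp only [vol]
          rw [Finset.sum_comm]
  have hvolσ : vol S σf q = ε ^ (q - p) * m := by
    have hterm2 : ∀ t, σf t ^ q = ε ^ (q - p) * ρ₁ t ^ p := by
      intro t
      rw [hσdef]
      rw [ENNReal.mul_rpow_of_nonneg _ _ hq0.le, ← ENNReal.rpow_mul, ← ENNReal.rpow_mul]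
      congr 2
      · field_simp
      · field_simp
    calc vol S σf q = ∑ t ∈ S, ε ^ (q - p) * ρ₁ t ^ p := by
          simp only [vol]
          exact Finset.sum_congr rfl fun t _ => hterm2 t
      _ = ε ^ (q - p) * ∑ t ∈ S, ρ₁ t ^ p := by rw [Finset.mul_sum]
      _ = ε ^ (q - p) * m := by rw [show (∑ t ∈ S, ρ₁ t ^ p) = m from hvol₁]
  have hsumA : ∑ s ∈ A, vol S (g s) q ≤ (ε⁻¹ ^ p * m) * (M + δ) := by
    calc ∑ s ∈ A, vol S (g s) q ≤ ∑ _s ∈ A, (M + δ) :=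
          Finset.sum_le_sum fun s hs => (hg s hs).2.1
      _ = (A.card : ℝ≥0∞) * (M + δ) := by rw [Finset.sum_const, nsmul_eq_mul]
      _ ≤ (ε⁻¹ ^ p * m) * (M + δ) := mul_le_mul_left hcard' _
  calc cmod S Γ q ≤ modWith S Γ τf q := cmod_le hτadm q
    _ ≤ vol S τf q := modWith_le_vol hτlen hq0
    _ ≤ vol S σf q + ∑ s ∈ A, vol S (g s) q := hvolτ
    _ ≤ ε ^ (q - p) * m + (ε⁻¹ ^ p * m) * (M + δ) := by
        rw [hvolσ]; exact add_le_add_right hsumA _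
    _ = (ε ^ (q - p) + ε⁻¹ ^ p * (M + δ)) * m := by ring

lemma cmod_zero_of_zero {S : Finset (Set X)} {Γ : Set (Set X)} (hΓne : Γ.Nonempty)
    {p q : ℝ} (hp : 0 < p) (hpq : p ≤ q) (h : cmod S Γ p = 0) : cmod S Γ q = 0 := by
  have hq : 0 < q := lt_of_lt_of_le hp hpq
  refine le_antisymm ?_ (zero_le)
  refine ENNReal.le_of_forall_pos_le_add fun η hη _ => ?_
  rw [zero_add]
  set σ : ℝ≥0∞ := min (η : ℝ≥0∞) 1 with hσdef
  have hσ0 : 0 < σ := lt_min (by exact_mod_cast hη) zero_lt_one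
  have hσ1 : σ ≤ 1 := min_le_right _ _
  have hση : σ ≤ (η : ℝ≥0∞) := min_le_left _ _
  have : cmod S Γ p < σ := h ▸ hσ0
  rw [cmod, iInf_lt_iff] at this
  obtain ⟨ρ, hlt⟩ := this
  rw [iInf_lt_iff] at hlt
  obtain ⟨hadm, hlt⟩ := hlt
  -- basic facts
  have hV0 : vol S ρ p ≠ 0 := vol_ne_zero hadm hp
  set L := Lmin S ρ Γ with hLdef
  have hL0 : L ≠ 0 := by
    intro hL
    rw [modWith, ← hLdef, hL, ENNReal.zero_rpow_of_pos hp, ENNReal.div_zero hV0] at hlt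
    exact absurd hlt (by simp)
  have hLtop : L ≠ ∞ := by
    obtain ⟨γ, hγ⟩ := hΓne
    exact ne_top_of_le_ne_top (len_ne_top hadm.1 γ) (Lmin_le ρ hγ)
  set ρ₁ : Set X → ℝ≥0∞ := fun t => ρ t * L⁻¹ with hρ₁def
  have hρ₁fin : ∀ t ∈ S, ρ₁ t ≠ ∞ := fun t ht =>
    ENNReal.mul_ne_top (hadm.1 t ht) (ENNReal.inv_ne_top.2 hL0)
  have hlen1 : ∀ γ ∈ Γ, 1 ≤ len S ρ₁ γ := by
    intro γ hγ
    rw [hρ₁def, len_smul]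
    calc (1 : ℝ≥0∞) = L * L⁻¹ := (ENNReal.mul_inv_cancel hL0 hLtop).symm
      _ ≤ len S ρ γ * L⁻¹ := mul_le_mul_left (Lmin_le ρ hγ) _
  have hvol₁ : vol S ρ₁ p = modWith S Γ ρ p := by
    rw [hρ₁def, vol_smul S ρ L⁻¹ hp.le, modWith, ← hLdef, div_eq_mul_inv, ENNReal.inv_rpow]
  have hvolp : vol S ρ₁ p < σ := hvol₁ ▸ hlt
  -- each ρ₁ t ≤ 1
  have hle1 : ∀ t ∈ S, ρ₁ t ≤ 1 := by
    intro t ht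
    by_contra hgt
    push_neg at hgt
    have h1 : (1 : ℝ≥0∞) ≤ ρ₁ t ^ p := ENNReal.one_le_rpow hgt.le hp
    have h2 : ρ₁ t ^ p ≤ vol S ρ₁ p := by
      rw [vol]; exact Finset.single_le_sum (f := fun s => ρ₁ s ^ p) (fun i _ => zero_le) ht
    exact absurd (lt_of_le_of_lt (h1.trans h2) (lt_of_lt_of_le hvolp hσ1)) (lt_irrefl _)
  have hvolq : vol S ρ₁ q ≤ vol S ρ₁ p :=
    Finset.sum_le_sum fun t ht => ENNReal.rpow_le_rpow_of_exponent_ge (hle1 t ht) hpq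
  have hadm₁ : Admissible S ρ₁ := by
    refine ⟨hρ₁fin, ?_⟩
    obtain ⟨s, hsS, hs⟩ := hadm.2
    exact ⟨s, hsS, by simp [hρ₁def, hs, hL0, hLtop]⟩
  calc cmod S Γ q ≤ modWith S Γ ρ₁ q := cmod_le hadm₁ q
    _ ≤ vol S ρ₁ q := modWith_le_vol hlen1 hq
    _ ≤ vol S ρ₁ p := hvolq
    _ ≤ (η : ℝ≥0∞) := (hvolp.le).trans hση



end CombModFin

open CombModFin

/-- Dimension comparison for combinatorial moduli: for `1 ≤ p ≤ q` and `ε > 0`,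
`mod_q(Γ,S) ≤ (ε^{q-p} + ε^{-p}·sup_{s∈S} mod_q(Γ(s),S))·mod_p(Γ,S)`, where
`Γ(s)` is the family of curves of `Γ` meeting `s`. -/
theorem stmt0 {X : Type*} (S : Finset (Set X)) (hcover : ∀ x : X, ∃ s ∈ S, x ∈ s)
    (Γ : Set (Set X)) (hΓ : ∀ γ ∈ Γ, γ.Nonempty)
    (p q : ℝ) (hp : 1 ≤ p) (hpq : p ≤ q)
    (ε : ℝ≥0∞) (hε : 0 < ε) (hε' : ε ≠ ∞) :
    cmod S Γ q ≤
      (ε ^ (q - p) + ε⁻¹ ^ p * ⨆ s ∈ S, cmod S {γ ∈ Γ | (γ ∩ s).Nonempty} q) *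
        cmod S Γ p := by
  have hp0 : (0 : ℝ) < p := lt_of_lt_of_le one_pos hp
  have hq0 : (0 : ℝ) < q := lt_of_lt_of_le hp0 hpq
  have hqp0 : (0 : ℝ) ≤ q - p := by linarith
  have hε0 : ε ≠ 0 := hε.ne'
  set M := ⨆ s ∈ S, cmod S {γ ∈ Γ | (γ ∩ s).Nonempty} q with hMdef
  have hc1_ne0 : ε ^ (q - p) ≠ 0 := by
    simp [ENNReal.rpow_eq_zero_iff, hε0, hε', not_lt.2 hqp0]
  have hc1_netop : ε ^ (q - p) ≠ ∞ := ENNReal.rpow_ne_top_of_nonneg hqp0 hε'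
  have hc2_ne0 : ε⁻¹ ^ p ≠ 0 := by
    simp [ENNReal.rpow_eq_zero_iff, ENNReal.inv_eq_zero, hε', ENNReal.inv_eq_top, hε0,
      not_lt.2 hp0.le]
  have hc2_netop : ε⁻¹ ^ p ≠ ∞ :=
    ENNReal.rpow_ne_top_of_nonneg hp0.le (ENNReal.inv_ne_top.2 hε0)
  rcases S.eq_empty_or_nonempty with hS | hS
  · have hno : ∀ ρ : Set X → ℝ≥0∞, ¬ Admissible S ρ := by
      intro ρ h
      obtain ⟨s, hsS, _⟩ := h.2
      simp [hS] at hsS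
    have hcp : cmod S Γ p = ∞ := by simp [cmod, hno]
    rw [hcp, ENNReal.mul_top (by simp [add_eq_zero, hc1_ne0])]
    exact le_top
  rcases Set.eq_empty_or_nonempty Γ with hΓe | hΓne
  · obtain ⟨s₀, hs₀⟩ := hS
    set ρ₀ : Set X → ℝ≥0∞ := fun t => if t = s₀ then 1 else 0 with hρ₀
    have hadm : Admissible S ρ₀ :=
      ⟨fun t _ => by by_cases h : t = s₀ <;> simp [hρ₀, h], ⟨s₀, hs₀, by simp [hρ₀]⟩⟩
    have hmod : modWith S Γ ρ₀ q = 0 := by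
      rw [modWith, Lmin, hΓe]
      simp [ENNReal.top_rpow_of_pos hq0]
    exact le_trans (le_of_le_of_eq (cmod_le hadm q) hmod) (zero_le)
  by_cases hM : M = ∞
  · by_cases hcp : cmod S Γ p = 0
    · rw [cmod_zero_of_zero hΓne hp0 hpq hcp]
      exact zero_le
    · have hR : (ε ^ (q - p) + ε⁻¹ ^ p * M) * cmod S Γ p = ∞ := by
        rw [hM, ENNReal.mul_top hc2_ne0, add_top _, ENNReal.top_mul hcp]
      exact hR ▸ le_top
  by_cases hcp : cmod S Γ p = ∞
  · have hR : (ε ^ (q - p) + ε⁻¹ ^ p * M) * cmod S Γ p = ∞ := by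
      rw [hcp, ENNReal.mul_top (by simp [add_eq_zero, hc1_ne0])]
    exact hR ▸ le_top
  set C := ε ^ (q - p) + ε⁻¹ ^ p * M with hCdef
  have hC_netop : C ≠ ∞ := by
    rw [hCdef]
    simp [ENNReal.add_ne_top, hc1_netop, ENNReal.mul_ne_top hc2_netop hM]
  set b := cmod S Γ p with hbdef
  refine ENNReal.le_of_forall_pos_le_add fun η hη _ => ?_
  have hη0 : ((η : ℝ≥0∞) / 2) ≠ 0 := by
    simp [ENNReal.div_eq_zero_iff]
    exact_mod_cast hη.ne'
  have hη_netop : ((η : ℝ≥0∞) / 2) ≠ ∞ := by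
    simp [ENNReal.div_eq_top]
  set η₁ := ((η : ℝ≥0∞) / 2) / (C + 1) with hη₁def
  have hη₁0 : η₁ ≠ 0 := by
    rw [hη₁def]
    simp [ENNReal.div_eq_zero_iff, hη0, hC_netop]
  have hη₁_netop : η₁ ≠ ∞ := by
    rw [hη₁def]
    simp [ENNReal.div_eq_top, hη0, hη_netop]
  have hblt : cmod S Γ p < b + η₁ := ENNReal.lt_add_right hcp hη₁0
  rw [cmod, iInf_lt_iff] at hblt
  obtain ⟨ρ, hblt⟩ := hblt
  rw [iInf_lt_iff] at hblt
  obtain ⟨hadm, hblt⟩ := hblt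
  have hbη_netop : b + η₁ ≠ ∞ := by simp [ENNReal.add_ne_top, hcp, hη₁_netop]
  set D := ε⁻¹ ^ p * (b + η₁) with hDdef
  have hD_netop : D ≠ ∞ := ENNReal.mul_ne_top hc2_netop hbη_netop
  set δ := ((η : ℝ≥0∞) / 2) / (D + 1) with hδdef
  have hδ0 : 0 < δ := by
    rw [hδdef]
    exact ENNReal.div_pos hη0 (by simp [hD_netop])
  have hδ_netop : δ ≠ ∞ := by
    rw [hδdef]
    simp [ENNReal.div_eq_top, hη0, hη_netop]
  have h1 : C * η₁ ≤ (η : ℝ≥0∞) / 2 := mul_div_add_one_le C _ hC_netop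
  have h2 : D * δ ≤ (η : ℝ≥0∞) / 2 := mul_div_add_one_le D _ hD_netop
  calc cmod S Γ q
      ≤ (ε ^ (q - p) + ε⁻¹ ^ p * (M + δ)) * modWith S Γ ρ p :=
        key S Γ hΓne p q hp hpq ε hε hε' δ hδ0 hδ_netop hM ρ hadm
    _ ≤ (ε ^ (q - p) + ε⁻¹ ^ p * (M + δ)) * (b + η₁) := mul_le_mul_right hblt.le _
    _ = C * b + (C * η₁ + D * δ) := by rw [hCdef, hDdef]; ring
    _ ≤ C * b + ((η : ℝ≥0∞) / 2 + (η : ℝ≥0∞) / 2) := add_le_add_right (add_le_add h1 h2) _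
    _ = C * b + η := by rw [ENNReal.add_halves]
end

section
/- Let S be a finite cover of a set X, Γ a nonempty curve family, and p ≥ 1. Then the combinatorial p-modulus is attained: there exists an admissible metric ρ such that mod_p(Γ,ρ,S) = mod_p(Γ,S). -/
open scoped ENNReal
open Set

attribute [local instance] Classical.propDecidable

open CombModFin

private lemma sum_min_one_ge {X : Type*} {F : Finset (Set X)} {f : Set X → ℝ≥0∞}
    (h : 1 ≤ ∑ s ∈ F, f s) : 1 ≤ ∑ s ∈ F, min (f s) 1 := by
  by_cases hex : ∃ s ∈ F, 1 ≤ f s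
  · obtain ⟨s, hs, h1⟩ := hex
    calc (1 : ℝ≥0∞) = min (f s) 1 := (min_eq_right h1).symm
      _ ≤ ∑ s ∈ F, min (f s) 1 :=
        Finset.single_le_sum (f := fun s => min (f s) 1) (fun i _ => zero_le) hs
  · push_neg at hex
    calc (1 : ℝ≥0∞) ≤ ∑ s ∈ F, f s := h
      _ = ∑ s ∈ F, min (f s) 1 :=
        Finset.sum_congr rfl fun s hs => (min_eq_left (hex s hs).le).symm

/-- Existence of optimal metrics: for a finite cover `S`, a nonempty curve family `Γ` and
`p ≥ 1`, the combinatorial `p`-modulus is attained by some admissible metric. -/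
theorem stmt4 {X : Type*} (S : Finset (Set X)) (hcover : ∀ x : X, ∃ s ∈ S, x ∈ s)
    (Γ : Set (Set X)) (hΓ : ∀ γ ∈ Γ, γ.Nonempty) (hΓne : Γ.Nonempty)
    (p : ℝ) (hp : 1 ≤ p) :
    ∃ ρ : Set X → ℝ≥0∞, Admissible S ρ ∧ modWith S Γ ρ p = cmod S Γ p := by
  have hp0 : (0 : ℝ) < p := lt_of_lt_of_le one_pos hp
  -- filters are nonempty
  have hfil : ∀ γ ∈ Γ, (S.filter fun s => (s ∩ γ).Nonempty).Nonempty := by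
    intro γ hγ
    obtain ⟨x, hx⟩ := hΓ γ hγ
    obtain ⟨s, hsS, hxs⟩ := hcover x
    exact ⟨s, Finset.mem_filter.mpr ⟨hsS, ⟨x, hxs, hx⟩⟩⟩
  -- the constraint set
  set K : Set (Set X → ℝ≥0∞) :=
    {x | (∀ s, x s ≤ 1) ∧ ∀ γ ∈ Γ, 1 ≤ len S x γ} with hK
  have hKclosed : IsClosed K := by
    have hKeq : K = (⋂ s : Set X, {x : Set X → ℝ≥0∞ | x s ≤ 1}) ∩
        ⋂ γ ∈ Γ, {x : Set X → ℝ≥0∞ | 1 ≤ len S x γ} := by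
      ext x
      simp [hK, Set.mem_iInter]
    rw [hKeq]
    apply IsClosed.inter
    · exact isClosed_iInter fun s =>
        isClosed_Iic.preimage (continuous_apply s)
    · refine isClosed_biInter fun γ hγ => ?_
      have hc : Continuous fun x : Set X → ℝ≥0∞ => len S x γ :=
        continuous_finset_sum _ fun s _ => continuous_apply s
      exact isClosed_Ici.preimage hc
  have hKcompact : IsCompact K := hKclosed.isCompact
  have hKne : K.Nonempty := by
    refine ⟨fun _ => 1, fun s => le_rfl, fun γ hγ => ?_⟩
    rw [len]
    obtain ⟨s, hs⟩ := hfil γ hγ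
    exact Finset.single_le_sum (f := fun _ => (1:ℝ≥0∞)) (fun i _ => zero_le) hs
  have hvolcont : Continuous fun x : Set X → ℝ≥0∞ => vol S x p := by
    exact continuous_finset_sum _ fun s _ =>
      ENNReal.continuous_rpow_const.comp (continuous_apply s)
  obtain ⟨x0, hx0K, hx0min⟩ := hKcompact.exists_isMinOn hKne hvolcont.continuousOn
  obtain ⟨hx0le, hx0len⟩ := hx0K
  -- x0 is admissible
  obtain ⟨γ0, hγ0⟩ := hΓne
  have hadm : Admissible S x0 := by
    constructor
    · exact fun s _ => ne_top_of_le_ne_top ENNReal.one_ne_top (hx0le s)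
    · by_contra hc
      push_neg at hc
      have : len S x0 γ0 = 0 := by
        rw [len]
        exact Finset.sum_eq_zero fun s hs => hc s (Finset.mem_filter.mp hs).1
      have h1 := hx0len γ0 hγ0
      rw [this] at h1
      simp at h1
  -- Lmin x0 ≥ 1
  have hL0 : 1 ≤ Lmin S x0 Γ := le_iInf₂ hx0len
  -- modWith x0 ≤ vol x0
  have hmle : modWith S Γ x0 p ≤ vol S x0 p := by
    rw [modWith, div_eq_mul_inv]
    have h1 : (1:ℝ≥0∞) ≤ Lmin S x0 Γ ^ p := by
      calc (1:ℝ≥0∞) = 1 ^ p := (ENNReal.one_rpow p).symm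
        _ ≤ Lmin S x0 Γ ^ p := ENNReal.rpow_le_rpow hL0 hp0.le
    calc vol S x0 p * (Lmin S x0 Γ ^ p)⁻¹ ≤ vol S x0 p * 1 :=
          mul_le_mul_right (ENNReal.inv_le_one.mpr h1) _
      _ = vol S x0 p := mul_one _
  -- cmod ≤ modWith x0
  have hub : cmod S Γ p ≤ modWith S Γ x0 p := iInf₂_le x0 hadm
  -- vol x0 ≤ modWith ρ for every admissible ρ
  have hlb : ∀ ρ : Set X → ℝ≥0∞, Admissible S ρ → vol S x0 p ≤ modWith S Γ ρ p := by
    intro ρ hρ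
    set L := Lmin S ρ Γ with hLdef
    by_cases hL : L = 0
    · -- modWith = ∞
      have hv : vol S ρ p ≠ 0 := by
        obtain ⟨s, hsS, hs0⟩ := hρ.2
        intro h
        have := Finset.sum_eq_zero_iff.mp h s hsS
        rw [ENNReal.rpow_eq_zero_iff_of_pos hp0] at this
        exact hs0 this
      rw [modWith, ← hLdef, hL, ENNReal.zero_rpow_of_pos hp0, ENNReal.div_zero hv]
      exact le_top
    · have hLtop : L ≠ ∞ := by
        have : L ≤ len S ρ γ0 := iInf₂_le γ0 hγ0
        refine ne_top_of_le_ne_top ?_ this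
        rw [len]
        exact (ENNReal.sum_lt_top.mpr fun s hs =>
          (hρ.1 s (Finset.mem_filter.mp hs).1).lt_top).ne
      set ρ' : Set X → ℝ≥0∞ := fun s => min (ρ s / L) 1 with hρ'
      have hρ'K : ρ' ∈ K := by
        constructor
        · exact fun s => min_le_right _ _
        · intro γ hγ
          rw [len]
          apply sum_min_one_ge
          have hlen : L ≤ ∑ s ∈ S.filter fun s => (s ∩ γ).Nonempty, ρ s :=
            iInf₂_le γ hγ
          have : ∑ s ∈ S.filter (fun s => (s ∩ γ).Nonempty), ρ s / L =
              (∑ s ∈ S.filter (fun s => (s ∩ γ).Nonempty), ρ s) / L := by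
            simp only [div_eq_mul_inv, Finset.sum_mul]
          rw [this, ENNReal.le_div_iff_mul_le (Or.inl hL) (Or.inl hLtop), one_mul]
          exact hlen
      have h1 : vol S x0 p ≤ vol S ρ' p := hx0min hρ'K
      have h2 : vol S ρ' p ≤ modWith S Γ ρ p := by
        rw [modWith, ← hLdef, vol]
        have : ∀ s ∈ S, ρ' s ^ p ≤ ρ s ^ p / L ^ p := by
          intro s _
          calc ρ' s ^ p ≤ (ρ s / L) ^ p :=
              ENNReal.rpow_le_rpow (min_le_left _ _) hp0.le
            _ = ρ s ^ p / L ^ p := ENNReal.div_rpow_of_nonneg _ _ hp0.le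
        calc ∑ s ∈ S, ρ' s ^ p ≤ ∑ s ∈ S, ρ s ^ p / L ^ p := Finset.sum_le_sum this
          _ = (∑ s ∈ S, ρ s ^ p) / L ^ p := by
            simp only [div_eq_mul_inv, Finset.sum_mul]
      exact h1.trans h2
  have hge : modWith S Γ x0 p ≤ cmod S Γ p :=
    hmle.trans (le_iInf₂ hlb)
  exact ⟨x0, hadm, le_antisymm hge hub⟩
end

section
/- Let S be a finite cover of a set X and Γ a nonempty curve family. If 1 ≤ p ≤ q, then mod_q(Γ,S) ≤ mod_p(Γ,S). -/
open scoped ENNReal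
open Set

attribute [local instance] Classical.propDecidable

open CombModFin

/-- Monotonicity of the combinatorial modulus in the exponent: if `1 ≤ p ≤ q`, then
`mod_q(Γ,S) ≤ mod_p(Γ,S)`. -/
theorem stmt5 {X : Type*} (S : Finset (Set X)) (hcover : ∀ x : X, ∃ s ∈ S, x ∈ s)
    (Γ : Set (Set X)) (hΓ : ∀ γ ∈ Γ, γ.Nonempty) (hΓne : Γ.Nonempty)
    (p q : ℝ) (hp : 1 ≤ p) (hpq : p ≤ q) :
    cmod S Γ q ≤ cmod S Γ p := by
  have hp0 : (0:ℝ) < p := lt_of_lt_of_le one_pos hp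
  have hq1 : (1:ℝ) ≤ q := le_trans hp hpq
  refine le_iInf₂ fun ρ hρ => ?_
  set L := Lmin S ρ Γ with hLdef
  -- L is finite
  have hLlt : L < ∞ := by
    obtain ⟨γ, hγ⟩ := hΓne
    have h1 : L ≤ len S ρ γ := biInf_le _ hγ
    have h2 : len S ρ γ < ∞ := by
      rw [len]
      refine ENNReal.sum_lt_top.2 fun s hs => ?_
      exact lt_top_iff_ne_top.2 (hρ.1 s (Finset.mem_filter.1 hs).1)
    exact lt_of_le_of_lt h1 h2
  -- vol S ρ p ≠ 0
  have hvol0 : vol S ρ p ≠ 0 := by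
    obtain ⟨s₀, hs₀S, hs₀⟩ := hρ.2
    have : ρ s₀ ^ p ≤ vol S ρ p :=
      Finset.single_le_sum (f := fun s => ρ s ^ p) (fun _ _ => zero_le) hs₀S
    intro h
    rw [h, le_zero_iff, ENNReal.rpow_eq_zero_iff] at this
    rcases this with ⟨h1, _⟩ | ⟨_, h2⟩
    · exact hs₀ h1
    · linarith
  by_cases hL0 : L = 0
  · -- denominator zero: RHS is ∞
    have : modWith S Γ ρ p = ∞ := by
      rw [modWith, ← hLdef, hL0, ENNReal.zero_rpow_of_pos hp0, ENNReal.div_zero hvol0]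
    rw [this]; exact le_top
  -- main case: 0 < L < ∞.  Define the truncated normalized metric.
  set σ : Set X → ℝ≥0∞ := fun s => min (ρ s / L) 1 with hσdef
  have hσle1 : ∀ s, σ s ≤ 1 := fun s => min_le_right _ _
  have hσadm : Admissible S σ := by
    constructor
    · intro s _; exact ne_top_of_le_ne_top ENNReal.one_ne_top (hσle1 s)
    · obtain ⟨s₀, hs₀S, hs₀⟩ := hρ.2
      refine ⟨s₀, hs₀S, ?_⟩
      have hdiv : (0:ℝ≥0∞) < ρ s₀ / L := by
        rw [pos_iff_ne_zero]
        simp [ENNReal.div_eq_zero_iff, hs₀, hLlt.ne]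
      exact ne_of_gt (lt_min hdiv one_pos)
  -- Lmin of σ is at least 1
  have hLσ : 1 ≤ Lmin S σ Γ := by
    refine le_iInf₂ fun γ hγ => ?_
    obtain ⟨x, hx⟩ := hΓ γ hγ
    obtain ⟨s, hsS, hxs⟩ := hcover x
    have hsT : s ∈ S.filter fun s => (s ∩ γ).Nonempty :=
      Finset.mem_filter.2 ⟨hsS, ⟨x, hxs, hx⟩⟩
    by_cases hbig : ∃ t ∈ S.filter fun s => (s ∩ γ).Nonempty, 1 ≤ ρ t / L
    · obtain ⟨t, htT, ht⟩ := hbig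
      have : σ t = 1 := by simp [hσdef, min_eq_right ht]
      calc (1:ℝ≥0∞) = σ t := this.symm
        _ ≤ len S σ γ := Finset.single_le_sum (fun _ _ => zero_le) htT
    · push_neg at hbig
      have heq : len S σ γ = len S ρ γ / L := by
        rw [len, len, div_eq_mul_inv, Finset.sum_mul]
        refine Finset.sum_congr rfl fun t htT => ?_
        rw [← div_eq_mul_inv]
        exact min_eq_left (le_of_lt (hbig t htT))
      rw [heq]
      rw [ENNReal.le_div_iff_mul_le (Or.inl hL0) (Or.inl hLlt.ne), one_mul]
      exact biInf_le _ hγ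
  -- now the chain
  have h1 : cmod S Γ q ≤ modWith S Γ σ q := iInf₂_le σ hσadm
  refine h1.trans ?_
  have hLσq : 1 ≤ Lmin S σ Γ ^ q := by
    calc (1:ℝ≥0∞) = 1 ^ q := (ENNReal.one_rpow q).symm
      _ ≤ Lmin S σ Γ ^ q := ENNReal.rpow_le_rpow hLσ (by linarith)
  have h2 : modWith S Γ σ q ≤ vol S σ q := by
    rw [modWith]
    calc vol S σ q / Lmin S σ Γ ^ q ≤ vol S σ q / 1 := ENNReal.div_le_div_left hLσq _
      _ = vol S σ q := by simp
  refine h2.trans ?_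
  have h3 : vol S σ q ≤ vol S σ p :=
    Finset.sum_le_sum fun s _ => ENNReal.rpow_le_rpow_of_exponent_ge (hσle1 s) hpq
  refine h3.trans ?_
  have h4 : vol S σ p ≤ vol S ρ p / L ^ p := by
    rw [vol]
    have : ∀ s ∈ S, σ s ^ p ≤ ρ s ^ p / L ^ p := by
      intro s _
      rw [← ENNReal.div_rpow_of_nonneg _ _ (le_of_lt hp0)]
      exact ENNReal.rpow_le_rpow (min_le_left _ _) (le_of_lt hp0)
    calc ∑ s ∈ S, σ s ^ p ≤ ∑ s ∈ S, ρ s ^ p / L ^ p := Finset.sum_le_sum this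
      _ = vol S ρ p / L ^ p := by
          rw [vol, div_eq_mul_inv, Finset.sum_mul]
          exact Finset.sum_congr rfl fun t _ => (div_eq_mul_inv _ _).symm
  exact h4.trans (le_of_eq rfl)
end

section
/- Let S be a finite cover of a set X, and let Γ and Γ' be nonempty curve families in X such that every curve of Γ intersects every curve of Γ' (γ ∩ γ' ≠ ∅ for all γ ∈ Γ, γ' ∈ Γ'). Then the combinatorial 2-moduli satisfy mod₂(Γ,S) · mod₂(Γ',S) ≤ 1. -/
open scoped ENNReal
open Set

attribute [local instance] Classical.propDecidable

open CombModFin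

section Aux

variable {X : Type*}

/-- If a real-valued metric `r` is nonnegative, positive somewhere on `S`, and gives every
curve of `Γ` length at least `1`, then `cmod S Γ 2` is at most its `2`-volume. -/
private lemma cmod_le_of_real (S : Finset (Set X)) (Γ : Set (Set X)) (r : Set X → ℝ)
    (hr0 : ∀ s, 0 ≤ r s) (hrS : ∃ s ∈ S, 0 < r s)
    (hL : ∀ γ ∈ Γ, 1 ≤ ∑ s ∈ S.filter fun s => (s ∩ γ).Nonempty, r s) :
    cmod S Γ 2 ≤ ENNReal.ofReal (∑ s ∈ S, (r s) ^ 2) := by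
  classical
  set ρ : Set X → ℝ≥0∞ := fun s => ENNReal.ofReal (r s) with hρdef
  have hadm : Admissible S ρ := by
    obtain ⟨s, hs, hpos⟩ := hrS
    exact ⟨fun s _ => ENNReal.ofReal_ne_top, s, hs, by
      simp [hρdef, ENNReal.ofReal_eq_zero, not_le, hpos]⟩
  have hvol : vol S ρ 2 = ENNReal.ofReal (∑ s ∈ S, (r s) ^ 2) := by
    rw [vol, ENNReal.ofReal_sum_of_nonneg (fun s _ => sq_nonneg _)]
    refine Finset.sum_congr rfl fun s _ => ?_
    rw [ENNReal.ofReal_rpow_of_nonneg (hr0 s) (by norm_num), Real.rpow_two]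
  have hlen : ∀ γ : Set X, len S ρ γ
      = ENNReal.ofReal (∑ s ∈ S.filter fun s => (s ∩ γ).Nonempty, r s) := by
    intro γ
    rw [len, ENNReal.ofReal_sum_of_nonneg (fun s _ => hr0 s)]
  have hLmin : (1 : ℝ≥0∞) ≤ Lmin S ρ Γ := by
    refine le_iInf₂ fun γ hγ => ?_
    rw [hlen γ]
    calc (1 : ℝ≥0∞) = ENNReal.ofReal 1 := by simp
    _ ≤ _ := ENNReal.ofReal_le_ofReal (hL γ hγ)
  have hmod : modWith S Γ ρ 2 ≤ ENNReal.ofReal (∑ s ∈ S, (r s) ^ 2) := by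
    rw [modWith, hvol]
    have h1 : (1 : ℝ≥0∞) ≤ Lmin S ρ Γ ^ (2 : ℝ) := by
      calc (1 : ℝ≥0∞) = 1 ^ (2 : ℝ) := by rw [ENNReal.one_rpow]
      _ ≤ _ := ENNReal.rpow_le_rpow hLmin (by norm_num)
    calc ENNReal.ofReal (∑ s ∈ S, (r s) ^ 2) / Lmin S ρ Γ ^ (2 : ℝ)
        ≤ ENNReal.ofReal (∑ s ∈ S, (r s) ^ 2) / 1 := ENNReal.div_le_div_left h1 _
    _ = ENNReal.ofReal (∑ s ∈ S, (r s) ^ 2) := by rw [div_one]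
  exact le_trans (iInf_le_of_le ρ (iInf_le _ hadm)) hmod

set_option maxHeartbeats 1000000 in
/-- Existence of an extremal metric for `Γ` satisfying the Beurling-type estimate
for the crossing family `Γ'`. -/
private lemma exists_extremal (S : Finset (Set X)) (hcover : ∀ x : X, ∃ s ∈ S, x ∈ s)
    (Γ Γ' : Set (Set X)) (hΓ : ∀ γ ∈ Γ, γ.Nonempty)
    (hmeet : ∀ γ ∈ Γ, ∀ γ' ∈ Γ', (γ ∩ γ').Nonempty) :
    ∃ r : Set X → ℝ, (∀ s, 0 ≤ r s) ∧
      (∀ γ ∈ Γ, 1 ≤ ∑ s ∈ S.filter fun s => (s ∩ γ).Nonempty, r s) ∧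
      (∀ γ' ∈ Γ', ∑ s ∈ S, (r s) ^ 2 ≤ ∑ s ∈ S.filter fun s => (s ∩ γ').Nonempty, r s) := by
  classical
  set K : Set (Set X → ℝ) :=
    (Set.univ.pi fun _ : Set X => Icc (0 : ℝ) 1) ∩
      (⋂ γ ∈ Γ, {r : Set X → ℝ | 1 ≤ ∑ s ∈ S.filter fun s => (s ∩ γ).Nonempty, r s}) with hKdef
  have hKc : IsCompact K := by
    refine (isCompact_univ_pi fun _ => isCompact_Icc).inter_right ?_
    refine isClosed_biInter fun γ _ => ?_
    exact isClosed_le continuous_const (continuous_finset_sum _ fun s _ => continuous_apply s)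
  have hmemK : ∀ r : Set X → ℝ, r ∈ K ↔ ((∀ s, r s ∈ Icc (0 : ℝ) 1) ∧
      ∀ γ ∈ Γ, 1 ≤ ∑ s ∈ S.filter fun s => (s ∩ γ).Nonempty, r s) := by
    intro r
    simp [hKdef, Set.mem_pi, Set.mem_iInter, Pi.le_def, forall_and]
  have hKne : K.Nonempty := by
    refine ⟨fun _ => 1, (hmemK _).2 ⟨fun s => ⟨zero_le_one, le_refl 1⟩, fun γ hγ => ?_⟩⟩
    obtain ⟨x, hx⟩ := hΓ γ hγ
    obtain ⟨s, hsS, hxs⟩ := hcover x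
    have hsf : s ∈ S.filter fun s => (s ∩ γ).Nonempty :=
      Finset.mem_filter.2 ⟨hsS, ⟨x, hxs, hx⟩⟩
    have hcard : 1 ≤ (S.filter fun s => (s ∩ γ).Nonempty).card :=
      Finset.card_pos.2 ⟨s, hsf⟩
    rw [Finset.sum_const, nsmul_eq_mul, mul_one]
    exact_mod_cast hcard
  obtain ⟨r, hrK, hrmin⟩ := hKc.exists_isMinOn hKne
    (f := fun r : Set X → ℝ => ∑ s ∈ S, (r s) ^ 2)
    ((continuous_finset_sum _ fun s _ => (continuous_apply s).pow 2).continuousOn)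
  obtain ⟨h0, h1⟩ := (hmemK r).1 hrK
  refine ⟨r, fun s => (h0 s).1, h1, fun γ' hγ' => ?_⟩
  by_contra hcon
  push_neg at hcon
  -- Beurling perturbation argument
  set V : ℝ := ∑ s ∈ S, (r s) ^ 2 with hVdef
  set P : ℝ := ∑ s ∈ S.filter fun s => (s ∩ γ').Nonempty, r s with hPdef
  have hd : 0 < V - P := by linarith
  set η : Set X → ℝ := fun s => if (s ∩ γ').Nonempty then (1 : ℝ) else 0 with hηdef
  have hη01 : ∀ s, η s ∈ Icc (0 : ℝ) 1 := by
    intro s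
    simp only [hηdef]
    split <;> norm_num
  set Q : ℝ := ∑ s ∈ S, (η s) ^ 2 with hQdef
  set C : ℝ := V - 2 * P + Q with hCdef
  set t : ℝ := min 1 ((V - P) / (|C| + 1)) with htdef
  have ht0 : 0 < t := lt_min one_pos (div_pos hd (by positivity))
  have ht1 : t ≤ 1 := min_le_left _ _
  have htC : t * C < V - P := by
    have h1 : t * C ≤ t * |C| := by
      have := le_abs_self C
      nlinarith
    have h2 : t * |C| < t * (|C| + 1) := by nlinarith
    have h3 : t * (|C| + 1) ≤ V - P := by
      have ht' : t ≤ (V - P) / (|C| + 1) := min_le_right _ _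
      have hpos : (0 : ℝ) < |C| + 1 := by positivity
      calc t * (|C| + 1) ≤ ((V - P) / (|C| + 1)) * (|C| + 1) := by nlinarith
      _ = V - P := div_mul_cancel₀ _ hpos.ne'
    linarith
  set rt : Set X → ℝ := fun s => (1 - t) * r s + t * η s with hrtdef
  have hrtK : rt ∈ K := by
    refine (hmemK _).2 ⟨fun s => ?_, fun γ hγ => ?_⟩
    · obtain ⟨ha, hb⟩ := h0 s
      obtain ⟨hc, he⟩ := hη01 s
      constructor
      · simp only [hrtdef]; nlinarith
      · simp only [hrtdef]; nlinarith
    · have hsum : ∑ s ∈ S.filter (fun s => (s ∩ γ).Nonempty), rt s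
          = (1 - t) * (∑ s ∈ S.filter (fun s => (s ∩ γ).Nonempty), r s)
            + t * (∑ s ∈ S.filter (fun s => (s ∩ γ).Nonempty), η s) := by
        rw [Finset.mul_sum, Finset.mul_sum, ← Finset.sum_add_distrib]
      have hηsum : 1 ≤ ∑ s ∈ S.filter (fun s => (s ∩ γ).Nonempty), η s := by
        obtain ⟨x, hxγ, hxγ'⟩ := hmeet γ hγ γ' hγ'
        obtain ⟨s, hsS, hxs⟩ := hcover x
        have hsf : s ∈ S.filter fun s => (s ∩ γ).Nonempty :=
          Finset.mem_filter.2 ⟨hsS, ⟨x, hxs, hxγ⟩⟩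
        have hηs : η s = 1 := by
          simp only [hηdef]
          exact if_pos ⟨x, hxs, hxγ'⟩
        calc (1 : ℝ) = η s := hηs.symm
        _ ≤ _ := Finset.single_le_sum (fun i _ => (hη01 i).1) hsf
      have hr1 := h1 γ hγ
      rw [hsum]
      nlinarith
  have hPη : ∑ s ∈ S, r s * η s = P := by
    rw [hPdef, Finset.sum_filter]
    refine Finset.sum_congr rfl fun s _ => ?_
    simp only [hηdef]
    split <;> simp
  have hexpand : ∑ s ∈ S, (rt s) ^ 2
      = (1 - t) ^ 2 * V + 2 * (t * (1 - t)) * P + t ^ 2 * Q := by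
    have h : ∀ s ∈ S, (rt s) ^ 2
        = (1 - t) ^ 2 * (r s) ^ 2 + 2 * (t * (1 - t)) * (r s * η s) + t ^ 2 * (η s) ^ 2 := by
      intro s _
      simp only [hrtdef]
      ring
    rw [Finset.sum_congr rfl h, Finset.sum_add_distrib, Finset.sum_add_distrib,
      ← Finset.mul_sum, ← Finset.mul_sum, ← Finset.mul_sum, hPη]
  have hlt : ∑ s ∈ S, (rt s) ^ 2 < V := by
    have hkey : V - ((1 - t) ^ 2 * V + 2 * (t * (1 - t)) * P + t ^ 2 * Q)
        = t * (2 * (V - P) - t * C) := by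
      simp only [hCdef]; ring
    have hpos : 0 < t * (2 * (V - P) - t * C) := mul_pos ht0 (by linarith)
    rw [hexpand]
    linarith
  have := hrmin hrtK
  simp only [Set.mem_setOf_eq] at this
  exact absurd (lt_of_le_of_lt this hlt) (lt_irrefl _)

end Aux

/-- If every curve of `Γ` meets every curve of `Γ'`, then the combinatorial `2`-moduli
satisfy `mod₂(Γ,S) · mod₂(Γ',S) ≤ 1`. -/
theorem stmt8 {X : Type*} (S : Finset (Set X)) (hcover : ∀ x : X, ∃ s ∈ S, x ∈ s)
    (Γ Γ' : Set (Set X)) (hΓ : ∀ γ ∈ Γ, γ.Nonempty) (hΓ' : ∀ γ ∈ Γ', γ.Nonempty)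
    (hΓne : Γ.Nonempty) (hΓ'ne : Γ'.Nonempty)
    (hmeet : ∀ γ ∈ Γ, ∀ γ' ∈ Γ', (γ ∩ γ').Nonempty) :
    cmod S Γ (2 : ℝ) * cmod S Γ' (2 : ℝ) ≤ 1 := by
  classical
  obtain ⟨r, h0, h1, h3⟩ := exists_extremal S hcover Γ Γ' hΓ hmeet
  set V : ℝ := ∑ s ∈ S, (r s) ^ 2 with hVdef
  obtain ⟨γ₀, hγ₀⟩ := hΓne
  -- positivity of V
  have hrpos : ∃ s ∈ S, 0 < r s := by
    by_contra hcon
    push_neg at hcon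
    have hz : ∀ s ∈ S.filter (fun s => (s ∩ γ₀).Nonempty), r s = 0 := fun s hs =>
      le_antisymm (hcon s (Finset.mem_filter.1 hs).1) (h0 s)
    have : (1 : ℝ) ≤ 0 := by
      have := h1 γ₀ hγ₀
      rwa [Finset.sum_eq_zero hz] at this
    linarith
  have hVpos : 0 < V := by
    obtain ⟨s, hsS, hs⟩ := hrpos
    have h1' : (r s) ^ 2 ≤ V := Finset.single_le_sum (fun i _ => sq_nonneg (r i)) hsS
    nlinarith
  -- first bound
  have bound1 : cmod S Γ 2 ≤ ENNReal.ofReal V := cmod_le_of_real S Γ r h0 hrpos h1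
  -- second bound, with metric r / V
  have bound2 : cmod S Γ' 2 ≤ ENNReal.ofReal V⁻¹ := by
    have hsum : ∑ s ∈ S, (r s / V) ^ 2 = V⁻¹ := by
      have : ∑ s ∈ S, (r s / V) ^ 2 = (∑ s ∈ S, (r s) ^ 2) / V ^ 2 := by
        rw [Finset.sum_div]
        exact Finset.sum_congr rfl fun s _ => div_pow _ _ _
      rw [this, ← hVdef, sq]
      field_simp
    have := cmod_le_of_real S Γ' (fun s => r s / V)
      (fun s => div_nonneg (h0 s) hVpos.le)
      (by
        obtain ⟨s, hsS, hs⟩ := hrpos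
        exact ⟨s, hsS, div_pos hs hVpos⟩)
      (by
        intro γ' hγ'
        rw [← Finset.sum_div, le_div_iff₀ hVpos, one_mul]
        exact h3 γ' hγ')
    rwa [hsum] at this
  calc cmod S Γ (2 : ℝ) * cmod S Γ' (2 : ℝ)
      ≤ ENNReal.ofReal V * ENNReal.ofReal V⁻¹ := mul_le_mul' bound1 bound2
  _ = ENNReal.ofReal (V * V⁻¹) := (ENNReal.ofReal_mul hVpos.le).symm
  _ = 1 := by rw [mul_inv_cancel₀ hVpos.ne', ENNReal.ofReal_one]
end

section
/- Let (Z,d) be a metric space and μ a doubling Borel measure on Z, i.e. there is a constant C ≥ 1 such that 0 < μ(B(x,2r)) ≤ C·μ(B(x,r)) < ∞ for all x ∈ Z and r > 0. Let A ⊆ Z and let a ∈ A be an m-density point of A, meaning lim_{r→0} μ(A ∩ B(a,r))/μ(B(a,r)) = 1 (where μ is applied to arbitrary sets via the induced outer measure). Then a is a t-density point of A: for every ε > 0, lim_{r→0} (1/r) · sup_{z ∈ B(a,r)} dist(z, A ∩ B(a,(1+ε)r)) = 0. -/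
open scoped ENNReal
open Set Metric Filter

/-- For a doubling Borel measure, every `m`-density point of a set `A` is a `t`-density
point: for all `ε > 0`, `(1/r)·sup_{z∈B(a,r)} dist(z, A ∩ B(a,(1+ε)r)) → 0` as `r → 0`. -/
theorem stmt9 {Z : Type*} [MetricSpace Z] [MeasurableSpace Z] [BorelSpace Z]
    (μ : MeasureTheory.Measure Z)
    (C : ℝ≥0∞) (hC : 1 ≤ C)
    (hdoubling : ∀ (x : Z) (r : ℝ), 0 < r →
      0 < μ (ball x (2 * r)) ∧ μ (ball x (2 * r)) ≤ C * μ (ball x r) ∧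
        C * μ (ball x r) < ∞)
    (A : Set Z) (a : Z) (ha : a ∈ A)
    (hm : Tendsto (fun r : ℝ => μ (A ∩ ball a r) / μ (ball a r))
      (nhdsWithin 0 (Set.Ioi 0)) (nhds 1)) :
    ∀ ε : ℝ, 0 < ε →
      Tendsto
        (fun r : ℝ =>
          (1 / r) * ⨆ z ∈ ball a r, infDist z (A ∩ ball a ((1 + ε) * r)))
        (nhdsWithin 0 (Set.Ioi 0)) (nhds 0) := by
  -- basic consequences of doubling
  have hball_pos : ∀ (x : Z) (s : ℝ), 0 < s → 0 < μ (ball x s) := by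
    intro x s hs
    have h := (hdoubling x (s / 2) (by linarith)).1
    rwa [show 2 * (s / 2) = s by ring] at h
  have hball_fin : ∀ (x : Z) (s : ℝ), 0 < s → μ (ball x s) < ∞ := by
    intro x s hs
    obtain ⟨_, h2, h3⟩ := hdoubling x (s / 2) (by linarith)
    rw [show 2 * (s / 2) = s by ring] at h2
    exact lt_of_le_of_lt h2 h3
  have hCfin : C ≠ ∞ := by
    intro hCt
    obtain ⟨_, _, h3⟩ := hdoubling a 1 one_pos
    have hb0 : μ (ball a 1) ≠ 0 := (hball_pos a 1 one_pos).ne'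
    rw [hCt, ENNReal.top_mul hb0] at h3
    exact (lt_irrefl _) h3
  -- iterated doubling
  have hiter : ∀ (k : ℕ) (x : Z) (s : ℝ), 0 < s →
      μ (ball x (2 ^ k * s)) ≤ C ^ k * μ (ball x s) := by
    intro k
    induction k with
    | zero => intro x s hs; simp
    | succ n ih =>
      intro x s hs
      have h2 := (hdoubling x (2 ^ n * s) (by positivity)).2.1
      calc μ (ball x (2 ^ (n + 1) * s)) = μ (ball x (2 * (2 ^ n * s))) := by
            rw [show (2:ℝ) ^ (n + 1) * s = 2 * (2 ^ n * s) by ring]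
        _ ≤ C * μ (ball x (2 ^ n * s)) := h2
        _ ≤ C * (C ^ n * μ (ball x s)) := mul_le_mul_right (ih x s hs) C
        _ = C ^ (n + 1) * μ (ball x s) := by ring
  intro ε hε
  rw [Metric.tendsto_nhds]
  intro δ hδ
  set δ' := min (δ / 2) ε with hδ'def
  have hδ'pos : 0 < δ' := lt_min (by linarith) hε
  have hδ'ε : δ' ≤ ε := min_le_right _ _
  have hδ'δ : δ' ≤ δ / 2 := min_le_left _ _
  obtain ⟨k, hk⟩ : ∃ k : ℕ, 2 * (1 + ε) ≤ 2 ^ k * δ' := by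
    obtain ⟨k, hk⟩ := pow_unbounded_of_one_lt (2 * (1 + ε) / δ') (y := (2:ℝ)) one_lt_two
    refine ⟨k, ?_⟩
    rw [div_lt_iff₀ hδ'pos] at hk
    nlinarith
  have hCk0 : (C ^ k) ≠ 0 := by
    have : (1:ℝ≥0∞) ≤ C ^ k := one_le_pow_of_one_le' hC k
    exact fun h => by simp [h] at this
  have hCkt : (C ^ k) ≠ ∞ := ENNReal.pow_ne_top hCfin
  set c := (C ^ k)⁻¹ with hc
  have hc0 : c ≠ 0 := ENNReal.inv_ne_zero.mpr hCkt
  have hc1 : c ≤ 1 := ENNReal.inv_le_one.mpr (one_le_pow_of_one_le' hC k)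
  have hlt1 : (1:ℝ≥0∞) - c < 1 := ENNReal.sub_lt_self ENNReal.one_ne_top one_ne_zero hc0
  have hmev : ∀ᶠ s in nhdsWithin (0:ℝ) (Set.Ioi 0),
      1 - c < μ (A ∩ ball a s) / μ (ball a s) :=
    hm.eventually (eventually_gt_nhds hlt1)
  have hmap : Tendsto (fun r : ℝ => (1 + ε) * r) (nhdsWithin 0 (Set.Ioi 0))
      (nhdsWithin 0 (Set.Ioi 0)) := by
    apply tendsto_nhdsWithin_of_tendsto_nhds_of_eventually_within
    · have h : Tendsto (fun r : ℝ => (1 + ε) * r) (nhds 0) (nhds ((1 + ε) * 0)) :=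
        (continuous_const.mul continuous_id).tendsto 0
      rw [mul_zero] at h
      exact h.mono_left nhdsWithin_le_nhds
    · filter_upwards [self_mem_nhdsWithin] with r hr
      exact mul_pos (by linarith : (0:ℝ) < 1 + ε) hr
  filter_upwards [hmap.eventually hmev, self_mem_nhdsWithin] with r hratio hr
  rw [Set.mem_Ioi] at hr
  set R := (1 + ε) * r with hR
  have hRpos : 0 < R := mul_pos (by linarith) hr
  -- key geometric claim
  have key : ∀ z ∈ ball a r, infDist z (A ∩ ball a R) ≤ δ' * r := by
    intro z hz
    by_contra hcon
    push_neg at hcon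
    have hz' : dist z a < r := mem_ball.mp hz
    have hdisj : A ∩ ball a R ⊆ ball a R \ ball z (δ' * r) := by
      intro w hw
      refine ⟨hw.2, fun hwz => ?_⟩
      have h1 : infDist z (A ∩ ball a R) ≤ dist z w := infDist_le_dist_of_mem hw
      rw [dist_comm] at h1
      rw [mem_ball] at hwz
      linarith
    have hsub1 : ball z (δ' * r) ⊆ ball a R := by
      intro w hw
      rw [mem_ball] at hw ⊢
      calc dist w a ≤ dist w z + dist z a := dist_triangle _ _ _
        _ < δ' * r + r := add_lt_add hw hz'
        _ ≤ ε * r + r := by nlinarith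
        _ = R := by rw [hR]; ring
    have hsub2 : ball a R ⊆ ball z (2 ^ k * (δ' * r)) := by
      intro w hw
      rw [mem_ball] at hw ⊢
      have hza : dist a z < r := by rw [dist_comm]; exact hz'
      have hmul : 2 * (1 + ε) * r ≤ 2 ^ k * δ' * r :=
        mul_le_mul_of_nonneg_right hk hr.le
      calc dist w z ≤ dist w a + dist a z := dist_triangle _ _ _
        _ < R + r := add_lt_add hw hza
        _ ≤ 2 ^ k * (δ' * r) := by rw [hR]; nlinarith
    set B := μ (ball a R) with hBdef
    set b := μ (ball z (δ' * r)) with hbdef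
    have hb_pos : 0 < b := hball_pos z _ (by positivity)
    have hB_fin : B < ∞ := hball_fin a R hRpos
    have hb_le : b ≤ B := MeasureTheory.measure_mono hsub1
    have hb_fin : b ≠ ∞ := (lt_of_le_of_lt hb_le hB_fin).ne
    have hBC : B ≤ C ^ k * b :=
      le_trans (MeasureTheory.measure_mono hsub2) (hiter k z (δ' * r) (by positivity))
    have hm_le : μ (A ∩ ball a R) ≤ B - b := by
      refine le_trans (MeasureTheory.measure_mono hdisj) ?_
      rw [MeasureTheory.measure_diff hsub1 measurableSet_ball.nullMeasurableSet hb_fin]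
    have hB0 : B ≠ 0 := (hball_pos a R hRpos).ne'
    have hBt : B ≠ ∞ := hB_fin.ne
    have h1 : (1 - c) * B < μ (A ∩ ball a R) := by
      rw [ENNReal.lt_div_iff_mul_lt (Or.inl hB0) (Or.inl hBt)] at hratio
      exact hratio
    have hcb : c * B ≤ b := by
      calc c * B ≤ c * (C ^ k * b) := mul_le_mul_right hBC c
        _ = (c * C ^ k) * b := (mul_assoc _ _ _).symm
        _ = 1 * b := by rw [hc, ENNReal.inv_mul_cancel hCk0 hCkt]
        _ = b := one_mul b
    have hcB_fin : c * B ≠ ∞ := by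
      refine (lt_of_le_of_lt ?_ hB_fin).ne
      calc c * B ≤ 1 * B := mul_le_mul_left hc1 B
        _ = B := one_mul B
    have hsum : μ (A ∩ ball a R) + b ≤ B := by
      calc μ (A ∩ ball a R) + b ≤ (B - b) + b := add_le_add_left hm_le b
        _ = B := tsub_add_cancel_of_le hb_le
    have hcontra : B < B := by
      calc B = (1 - c) * B + c * B := by
            rw [← add_mul, tsub_add_cancel_of_le hc1, one_mul]
        _ < μ (A ∩ ball a R) + c * B := ENNReal.add_lt_add_right hcB_fin h1
        _ ≤ μ (A ∩ ball a R) + b := add_le_add_right hcb _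
        _ ≤ B := hsum
    exact lt_irrefl B hcontra
  have hsup_le : (⨆ z ∈ ball a r, infDist z (A ∩ ball a R)) ≤ δ' * r := by
    refine Real.iSup_le (fun z => Real.iSup_le (fun hz => key z hz) (by positivity))
      (by positivity)
  have hsup_nonneg : 0 ≤ ⨆ z ∈ ball a r, infDist z (A ∩ ball a R) :=
    Real.iSup_nonneg fun z => Real.iSup_nonneg fun _ => infDist_nonneg
  have hfr : (1 / r) * (⨆ z ∈ ball a r, infDist z (A ∩ ball a R)) ≤ δ' := by
    have h := mul_le_mul_of_nonneg_left hsup_le (le_of_lt (one_div_pos.mpr hr))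
    rwa [show (1 / r) * (δ' * r) = δ' by field_simp] at h
  rw [Real.dist_eq, sub_zero, abs_of_nonneg (mul_nonneg (by positivity) hsup_nonneg)]
  linarith
end

section
/- (Filling-in.) Let X be an unbounded, proper, L-annularly linearly connected metric space, let K ⊆ X be a compact set with diam K > 0, and let x ∈ K. Then all points of X at distance greater than 2L·diam K from x lie in a single connected component of X ∖ K; in particular the union of K with all the other components of X ∖ K is a compact set contained in the closed ball of radius 2L·diam K about x. -/
open Set Metric

/-- An arc in a metric space: an injective continuous map defined on `[0,1]`. -/
def IsArc {X : Type*} [MetricSpace X] (γ : ℝ → X) : Prop :=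
  ContinuousOn γ (Set.Icc 0 1) ∧ Set.InjOn γ (Set.Icc 0 1)

/-- A set `U` is arcwise connected if any two distinct points of `U` are joined by an arc
contained in `U`. -/
def ArcConnected {X : Type*} [MetricSpace X] (U : Set X) : Prop :=
  ∀ x ∈ U, ∀ y ∈ U, x ≠ y →
    ∃ c : ℝ → X, IsArc c ∧ c 0 = x ∧ c 1 = y ∧ c '' Set.Icc 0 1 ⊆ U

/-- `X` is `L`-annularly linearly connected: (BT) any two points lie in a continuum of
diameter at most `L` times their distance, and (ALC2) for `0 < r`, `2r ≤ R ≤ diam X`, any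
two points of `B(x,R) ∖ B(x,r)` are joined by a continuum inside `B(x,LR) ∖ B(x,r/L)`. -/
def IsALC (L : ℝ) (X : Type*) [MetricSpace X] : Prop :=
  (∀ x y : X, ∃ K : Set X, IsCompact K ∧ IsConnected K ∧ x ∈ K ∧ y ∈ K ∧
      Metric.diam K ≤ L * dist x y) ∧
  (∀ (x : X) (r R : ℝ), 0 < r → 2 * r ≤ R →
      ENNReal.ofReal R ≤ EMetric.diam (Set.univ : Set X) →
      ∀ y ∈ Metric.ball x R \ Metric.ball x r, ∀ z ∈ Metric.ball x R \ Metric.ball x r,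
        ∃ K : Set X, IsCompact K ∧ IsConnected K ∧ y ∈ K ∧ z ∈ K ∧
          K ⊆ Metric.ball x (L * R) \ Metric.ball x (r / L))

lemma bt_locallyConnected {X : Type*} [MetricSpace X] {L : ℝ} (hL : 1 ≤ L)
    (hBT : ∀ x y : X, ∃ K : Set X, IsCompact K ∧ IsConnected K ∧ x ∈ K ∧ y ∈ K ∧
      Metric.diam K ≤ L * dist x y) : LocallyConnectedSpace X := by
  rw [locallyConnectedSpace_iff_connected_subsets]
  intro x U hU
  obtain ⟨ε, hε, hball⟩ := Metric.mem_nhds_iff.1 hU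
  have hL0 : (0:ℝ) < L := lt_of_lt_of_le one_pos hL
  choose Kf hKc hKconn hxK hyK hKd using hBT x
  set δ := ε / (2 * L) with hδdef
  have hδ : 0 < δ := div_pos hε (by linarith)
  refine ⟨⋃ y : ball x δ, Kf y, ?_, ?_, ?_⟩
  · refine Filter.mem_of_superset (ball_mem_nhds x hδ) ?_
    intro y hy
    exact mem_iUnion.2 ⟨⟨y, hy⟩, hyK y⟩
  · refine isPreconnected_iUnion ⟨x, ?_⟩ fun y => (hKconn y).isPreconnected
    exact mem_iInter.2 fun y => hxK y
  · refine iUnion_subset fun y => ?_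
    intro z hz
    apply hball
    have h1 : dist z x ≤ Metric.diam (Kf y) :=
      Metric.dist_le_diam_of_mem (hKc y).isBounded hz (hxK y)
    have h2 : L * dist x (y : X) < L * δ := by
      have := y.2
      rw [mem_ball] at this
      rw [dist_comm]
      exact mul_lt_mul_of_pos_left this hL0
    have : L * δ = ε / 2 := by rw [hδdef]; field_simp
    have hzx : dist z x < ε / 2 := by
      calc dist z x ≤ L * dist x (y : X) := h1.trans (hKd y)
        _ < ε / 2 := by rw [← this]; exact h2
    exact mem_ball.2 (by linarith)

/-- Filling-in: in an unbounded proper `L`-ALC space, all points at distance greater than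
`2L·diam K` from a point `x ∈ K` lie in one connected component `Ω` of `X ∖ K`, and the
filling-in `X ∖ Ω = K ∪ (other components)` is compact and contained in
`closedBall x (2L·diam K)`. -/
theorem stmt13 {X : Type*} [MetricSpace X] [ProperSpace X]
    (hunbd : EMetric.diam (Set.univ : Set X) = ⊤)
    (L : ℝ) (hL : 1 ≤ L) (hALC : IsALC L X)
    (K : Set X) (hK : IsCompact K) (hKdiam : 0 < Metric.diam K)
    (x : X) (hx : x ∈ K) :
    ∃ Ω : Set X,
      (∀ y : X, 2 * L * Metric.diam K < dist x y →
        y ∈ Ω ∧ Ω = connectedComponentIn Kᶜ y) ∧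
      IsCompact Ωᶜ ∧ Ωᶜ ⊆ Metric.closedBall x (2 * L * Metric.diam K) := by
  obtain ⟨hBT, hALC2⟩ := hALC
  have hL0 : (0:ℝ) < L := lt_of_lt_of_le one_pos hL
  haveI : LocallyConnectedSpace X := bt_locallyConnected hL hBT
  set D := Metric.diam K with hD
  set R₀ := 2 * L * D with hR₀
  have hR₀pos : 0 < R₀ := by positivity
  -- K is inside the ball of radius 2D
  have hKball : K ⊆ Metric.ball x (2 * D) := fun k hk => by
    rw [mem_ball, dist_comm]
    have : dist x k ≤ D := Metric.dist_le_diam_of_mem hK.isBounded hx hk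
    linarith
  -- any two far points are joined inside Kᶜ
  have hjoin : ∀ y z : X, R₀ < dist x y → R₀ < dist x z →
      connectedComponentIn Kᶜ y = connectedComponentIn Kᶜ z := by
    intro y z hy hz
    set R := max (4 * L * D) (max (dist x y) (dist x z)) + 1 with hRdef
    have hr : (0:ℝ) < R₀ := hR₀pos
    have h2r : 2 * R₀ ≤ R := by
      have : 2 * R₀ ≤ max (4 * L * D) (max (dist x y) (dist x z)) := by
        refine le_max_of_le_left ?_; rw [hR₀]; ring_nf; rfl
      linarith
    have hyR : dist x y < R := by
      have := le_max_of_le_right (le_max_left (dist x y) (dist x z))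
        (b := 4 * L * D)
      linarith
    have hzR : dist x z < R := by
      have := le_max_of_le_right (le_max_right (dist x y) (dist x z))
        (b := 4 * L * D)
      linarith
    obtain ⟨M, hMc, hMconn, hyM, hzM, hMsub⟩ :=
      hALC2 x R₀ R hr h2r (by rw [hunbd]; exact le_top)
        y ⟨mem_ball'.2 hyR, fun h => absurd (mem_ball'.1 h) (not_lt.2 hy.le)⟩
        z ⟨mem_ball'.2 hzR, fun h => absurd (mem_ball'.1 h) (not_lt.2 hz.le)⟩
    have hrL : R₀ / L = 2 * D := by field_simp [hR₀]; ring
    have hMK : M ⊆ Kᶜ := by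
      intro m hm hmK
      exact (hMsub hm).2 (by rw [hrL] at *; exact hKball hmK)
    have : z ∈ connectedComponentIn Kᶜ y :=
      hMconn.isPreconnected.subset_connectedComponentIn hyM hMK hzM
    exact connectedComponentIn_eq this
  -- pick a far point
  have hfar : ∃ y₀ : X, R₀ < dist x y₀ := by
    by_contra h
    push_neg at h
    have : Bornology.IsBounded (Set.univ : Set X) := by
      refine (Metric.isBounded_iff_subset_closedBall x).2 ⟨R₀, fun y _ => ?_⟩
      rw [Metric.mem_closedBall, dist_comm]; exact h y
    exact this.ediam_ne_top hunbd
  obtain ⟨y₀, hy₀⟩ := hfar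
  refine ⟨connectedComponentIn Kᶜ y₀, ?_, ?_, ?_⟩
  · intro y hy
    have heq := hjoin y₀ y hy₀ hy
    exact ⟨heq ▸ mem_connectedComponentIn (by
        intro hyK
        have := Metric.dist_le_diam_of_mem hK.isBounded hx hyK
        nlinarith), heq⟩
  · have hopen : IsOpen (connectedComponentIn Kᶜ y₀) :=
      (isOpen_compl_iff.2 hK.isClosed).connectedComponentIn
    refine (isCompact_closedBall x R₀).of_isClosed_subset hopen.isClosed_compl ?_
    intro y hy
    by_contra hyball
    have hy' : R₀ < dist x y := by
      rw [Metric.mem_closedBall, dist_comm, not_le] at hyball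
      exact hyball
    exact hy ((hjoin y₀ y hy₀ hy') ▸ mem_connectedComponentIn (by
      intro hyK
      have := Metric.dist_le_diam_of_mem hK.isBounded hx hyK
      nlinarith))
  · intro y hy
    by_contra hyball
    have hy' : R₀ < dist x y := by
      rw [Metric.mem_closedBall, dist_comm, not_le] at hyball
      exact hyball
    exact hy ((hjoin y₀ y hy₀ hy') ▸ mem_connectedComponentIn (by
      intro hyK
      have := Metric.dist_le_diam_of_mem hK.isBounded hx hyK
      nlinarith))
end

section
/- Let X be an unbounded, proper, L-annularly linearly connected metric space. Then the one-point (Alexandroff) compactification of X is a compact, Hausdorff, connected, and locally connected topological space. -/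
open Set Metric

open OnePoint in
/-- The one-point (Alexandroff) compactification of an unbounded, proper, `L`-annularly
linearly connected metric space is a compact, Hausdorff, connected and locally connected
topological space. -/
theorem stmt14 {X : Type*} [MetricSpace X] [ProperSpace X]
    (hunbd : EMetric.diam (Set.univ : Set X) = ⊤)
    (L : ℝ) (hL : 1 ≤ L) (hALC : IsALC L X) :
    CompactSpace (OnePoint X) ∧ T2Space (OnePoint X) ∧
      ConnectedSpace (OnePoint X) ∧ LocallyConnectedSpace (OnePoint X) := by
  obtain ⟨hBT, hALC2⟩ := hALC
  have hL0 : (0:ℝ) < L := lt_of_lt_of_le one_pos hL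
  haveI hnc : NoncompactSpace X := Metric.ediam_univ_eq_top_iff_noncompact.mp hunbd
  -- X is nonempty
  have hne : Nonempty X := by
    by_contra h
    rw [not_nonempty_iff] at h
    rw [Set.univ_eq_empty_iff.mpr h, EMetric.diam, Metric.ediam_empty] at hunbd
    exact ENNReal.zero_ne_top hunbd
  -- escape lemma: points arbitrarily far from any basepoint
  have hesc : ∀ (x0 : X) (ρ : ℝ), ∃ y : X, ρ < dist x0 y := by
    intro x0 ρ
    by_contra h
    push_neg at h
    have hb : Bornology.IsBounded (Set.univ : Set X) :=
      (Metric.isBounded_closedBall (x := x0) (r := ρ)).subset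
        (fun y _ => by simpa [Metric.mem_closedBall, dist_comm] using h y)
    rw [EMetric.diam, Metric.ediam_eq_top_iff_unbounded] at hunbd
    exact hunbd hb
  -- X is preconnected
  haveI hpc : PreconnectedSpace X := by
    obtain ⟨x0⟩ := hne
    refine ⟨isPreconnected_of_forall x0 fun y _ => ?_⟩
    obtain ⟨K, _, hKc, hxK, hyK, _⟩ := hBT x0 y
    exact ⟨K, subset_univ K, hxK, hyK, hKc.isPreconnected⟩
  refine ⟨inferInstance, inferInstance, inferInstance, ?_⟩
  -- local connectedness
  rw [locallyConnectedSpace_iff_connected_subsets]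
  intro x U hU
  cases x with
  | infty =>
    -- the point at infinity
    obtain ⟨s, ⟨hscl, hscpt⟩, hsU⟩ := (OnePoint.hasBasis_nhds_infty).mem_iff.mp hU
    obtain ⟨x0⟩ := hne
    obtain ⟨r0, hsr0⟩ := (Metric.isBounded_iff_subset_closedBall x0).mp hscpt.isBounded
    set r : ℝ := max r0 0 + 1 with hr_def
    have hr0 : (0:ℝ) < r := by positivity
    have hsr : s ⊆ Metric.ball x0 r := hsr0.trans (Metric.closedBall_subset_ball (by
      have := le_max_left r0 0; linarith))
    have hrLr : r ≤ L * r := le_mul_of_one_le_left hr0.le hL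
    -- choice of base point outside the big ball
    obtain ⟨y0, hy0⟩ := hesc x0 (L * r)
    set C : Set X := (Metric.ball x0 (L * r))ᶜ with hC_def
    have hy0C : y0 ∈ C := by
      simp only [hC_def, mem_compl_iff, Metric.mem_ball]
      rw [dist_comm]; linarith
    -- joining any point of C to y0 within the complement of ball x0 r
    have hjoin : ∀ z ∈ C, ∃ K : Set X, IsPreconnected K ∧ y0 ∈ K ∧ z ∈ K ∧
        K ⊆ (Metric.ball x0 r)ᶜ := by
      intro z hz
      have hzd : L * r ≤ dist z x0 := by
        have := hz; simp only [hC_def, mem_compl_iff, Metric.mem_ball, not_lt] at this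
        exact this
      set R : ℝ := max (2 * (L * r)) (max (dist y0 x0) (dist z x0)) + 1 with hR_def
      have hR1 : 2 * (L * r) ≤ R := by
        have := le_max_left (2 * (L * r)) (max (dist y0 x0) (dist z x0)); linarith
      have hRy : dist y0 x0 < R := by
        have h1 := le_max_right (2 * (L * r)) (max (dist y0 x0) (dist z x0))
        have h2 := le_max_left (dist y0 x0) (dist z x0); linarith
      have hRz : dist z x0 < R := by
        have h1 := le_max_right (2 * (L * r)) (max (dist y0 x0) (dist z x0))
        have h2 := le_max_right (dist y0 x0) (dist z x0); linarith
      have hy0mem : y0 ∈ Metric.ball x0 R \ Metric.ball x0 (L * r) := by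
        constructor
        · exact Metric.mem_ball.mpr hRy
        · intro hmem
          rw [Metric.mem_ball] at hmem
          rw [dist_comm] at hy0
          linarith
      have hzmem : z ∈ Metric.ball x0 R \ Metric.ball x0 (L * r) := by
        refine ⟨Metric.mem_ball.mpr hRz, ?_⟩
        simp only [Metric.mem_ball, not_lt]; exact hzd
      obtain ⟨K, _, hKc, hyK, hzK, hKsub⟩ :=
        hALC2 x0 (L * r) R (by positivity) hR1 (hunbd ▸ le_top) y0 hy0mem z hzmem
      refine ⟨K, hKc.isPreconnected, hyK, hzK, fun w hw => ?_⟩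
      have := (hKsub hw).2
      rwa [mul_div_cancel_left₀ r (ne_of_gt hL0)] at this
    choose K hKpc hKy0 hKself hKsub using hjoin
    set W : Set X := ⋃ (z : X) (hz : z ∈ C), K z hz with hW_def
    have hCW : C ⊆ W := fun z hz => mem_iUnion.mpr ⟨z, mem_iUnion.mpr ⟨hz, hKself z hz⟩⟩
    have hWsub : W ⊆ (Metric.ball x0 r)ᶜ := by
      intro w hw
      simp only [hW_def, mem_iUnion] at hw
      obtain ⟨z, hz, hwK⟩ := hw
      exact hKsub z hz hwK
    have hWpc : IsPreconnected W := by
      apply isPreconnected_of_forall y0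
      intro w hw
      simp only [hW_def, mem_iUnion] at hw
      obtain ⟨z, hz, hwK⟩ := hw
      exact ⟨K z hz, fun u hu => mem_iUnion.mpr ⟨z, mem_iUnion.mpr ⟨hz, hu⟩⟩,
        hKy0 z hz, hwK, hKpc z hz⟩
    set V : Set (OnePoint X) := (↑) '' W ∪ {∞} with hV_def
    have hinfty : (∞ : OnePoint X) ∈ closure ((↑) '' W : Set (OnePoint X)) := by
      rw [mem_closure_iff_nhds]
      intro t ht
      obtain ⟨u, ⟨_, hucpt⟩, hut⟩ := (OnePoint.hasBasis_nhds_infty).mem_iff.mp ht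
      obtain ⟨ρ, huρ⟩ := (Metric.isBounded_iff_subset_closedBall x0).mp hucpt.isBounded
      obtain ⟨y, hy⟩ := hesc x0 (max ρ (L * r))
      have hyC : y ∈ C := by
        simp only [hC_def, mem_compl_iff, Metric.mem_ball, not_lt]
        rw [dist_comm]
        exact le_of_lt (lt_of_le_of_lt (le_max_right _ _) hy)
      have hyu : y ∉ u := by
        intro hyu
        have := huρ hyu
        rw [Metric.mem_closedBall, dist_comm] at this
        have := lt_of_le_of_lt (le_max_left ρ (L * r)) hy
        linarith
      exact ⟨(y : OnePoint X), hut (Or.inl ⟨y, hyu, rfl⟩), ⟨y, hCW hyC, rfl⟩⟩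
    refine ⟨V, ?_, ?_, ?_⟩
    · -- V is a neighborhood of ∞
      apply (OnePoint.hasBasis_nhds_infty).mem_iff.mpr
      refine ⟨Metric.closedBall x0 (L * r), ⟨Metric.isClosed_closedBall,
        isCompact_closedBall x0 (L * r)⟩, ?_⟩
      rintro w (⟨z, hz, rfl⟩ | hw)
      · apply Or.inl
        refine ⟨z, hCW ?_, rfl⟩
        simp only [hC_def, mem_compl_iff, Metric.mem_ball]
        simp only [mem_compl_iff, Metric.mem_closedBall, not_le] at hz
        intro h; linarith
      · exact Or.inr hw
    · -- V is preconnected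
      have hWpc' : IsPreconnected (((↑) '' W : Set (OnePoint X))) :=
        hWpc.image _ OnePoint.continuous_coe.continuousOn
      apply hWpc'.subset_closure subset_union_left
      rintro w (hw | hw)
      · exact subset_closure hw
      · rw [mem_singleton_iff] at hw; rw [hw]; exact hinfty
    · -- V ⊆ U
      rintro w (⟨z, hz, rfl⟩ | hw)
      · apply hsU
        apply Or.inl
        exact ⟨z, fun hzs => hWsub hz (hsr hzs), rfl⟩
      · exact hsU (Or.inr hw)
  | coe a =>
    -- an ordinary point
    rw [OnePoint.nhds_coe_eq, Filter.mem_map] at hU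
    obtain ⟨ε, hε, hball⟩ := Metric.mem_nhds_iff.mp hU
    set δ : ℝ := ε / (2 * L) with hδ_def
    have hδ0 : (0:ℝ) < δ := by positivity
    have hjoin : ∀ y ∈ Metric.ball a δ, ∃ K : Set X, IsPreconnected K ∧ a ∈ K ∧ y ∈ K ∧
        K ⊆ Metric.ball a ε := by
      intro y hy
      obtain ⟨K, hKcpt, hKc, haK, hyK, hKd⟩ := hBT a y
      refine ⟨K, hKc.isPreconnected, haK, hyK, fun w hw => ?_⟩
      rw [Metric.mem_ball, dist_comm]
      have h1 : dist a w ≤ Metric.diam K := Metric.dist_le_diam_of_mem hKcpt.isBounded haK hw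
      have h2 : dist a y < δ := by rw [dist_comm]; exact Metric.mem_ball.mp hy
      have h3 : L * dist a y < L * δ := by
        apply mul_lt_mul_of_pos_left h2 hL0
      have h4 : L * δ = ε / 2 := by
        rw [hδ_def]; field_simp
      calc dist a w ≤ L * dist a y := h1.trans hKd
        _ < ε / 2 := by rw [← h4]; exact h3
        _ < ε := by linarith
    choose K hKpc hKa hKself hKsub using hjoin
    set W : Set X := ⋃ (y : X) (hy : y ∈ Metric.ball a δ), K y hy with hW_def
    have hbW : Metric.ball a δ ⊆ W := fun y hy =>
      mem_iUnion.mpr ⟨y, mem_iUnion.mpr ⟨hy, hKself y hy⟩⟩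
    have hWsub : W ⊆ Metric.ball a ε := by
      intro w hw
      simp only [hW_def, mem_iUnion] at hw
      obtain ⟨y, hy, hwK⟩ := hw
      exact hKsub y hy hwK
    have hWpc : IsPreconnected W := by
      apply isPreconnected_of_forall a
      intro w hw
      simp only [hW_def, mem_iUnion] at hw
      obtain ⟨y, hy, hwK⟩ := hw
      exact ⟨K y hy, fun u hu => mem_iUnion.mpr ⟨y, mem_iUnion.mpr ⟨hy, hu⟩⟩,
        hKa y hy, hwK, hKpc y hy⟩
    refine ⟨(↑) '' W, ?_, hWpc.image _ OnePoint.continuous_coe.continuousOn, ?_⟩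
    · rw [OnePoint.nhds_coe_eq, Filter.mem_map,
        Set.preimage_image_eq W OnePoint.coe_injective]
      exact Filter.mem_of_superset (Metric.ball_mem_nhds a hδ0) hbW
    · rintro w ⟨z, hz, rfl⟩
      exact hball (hWsub hz)
end

section
/- Let X be a metric space, I ⊆ ℝ an interval, γ : I → X a 1-Lipschitz map, and t an interior point of I. If lim_{h→0} d(γ(t+h),γ(t−h))/(2|h|) = 1, then lim_{h→0} d(γ(t+h),γ(t))/|h| = 1 (limits taken over h ≠ 0 with t ± h ∈ I). -/
open Filter

/-- If a 1-Lipschitz curve `γ : I → X` satisfies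
`d(γ(t+h),γ(t−h))/(2|h|) → 1` as `h → 0` at an interior point `t` of the interval `I`,
then also `d(γ(t+h),γ(t))/|h| → 1` as `h → 0`. -/
theorem stmt16 {X : Type*} [MetricSpace X] (I : Set ℝ) (hI : I.OrdConnected)
    (γ : ℝ → X) (hγ : LipschitzOnWith 1 γ I)
    (t : ℝ) (ht : t ∈ interior I)
    (hlim : Tendsto (fun h : ℝ => dist (γ (t + h)) (γ (t - h)) / (2 * |h|))
      (nhdsWithin 0 {h : ℝ | h ≠ 0 ∧ t + h ∈ I ∧ t - h ∈ I}) (nhds 1)) :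
    Tendsto (fun h : ℝ => dist (γ (t + h)) (γ t) / |h|)
      (nhdsWithin 0 {h : ℝ | h ≠ 0 ∧ t + h ∈ I}) (nhds 1) := by
  obtain ⟨ε, εpos, hball⟩ := Metric.isOpen_iff.mp isOpen_interior t ht
  have hIball : Metric.ball t ε ⊆ I := hball.trans interior_subset
  have hmem : ∀ h : ℝ, |h| < ε → t + h ∈ I ∧ t - h ∈ I := by
    intro h hh
    constructor <;> apply hIball <;> simp [Real.dist_eq, abs_sub_comm, abs_neg, hh]
  -- both filters equal the punctured neighborhood filter
  have hsmall : ∀ᶠ h : ℝ in nhds 0, |h| < ε := by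
    have : Metric.ball (0:ℝ) ε ∈ nhds (0:ℝ) := Metric.ball_mem_nhds 0 εpos
    filter_upwards [this] with h hh
    simpa [Real.dist_eq] using hh
  have heq1 : {h : ℝ | h ≠ 0 ∧ t + h ∈ I ∧ t - h ∈ I} =ᶠ[nhds 0] {h : ℝ | h ≠ 0} := by
    filter_upwards [hsmall] with h hh
    simp only [Set.mem_setOf_eq, eq_iff_iff]
    exact ⟨fun ⟨h1, _⟩ => h1, fun h1 => ⟨h1, hmem h hh⟩⟩
  have heq2 : {h : ℝ | h ≠ 0 ∧ t + h ∈ I} =ᶠ[nhds 0] {h : ℝ | h ≠ 0} := by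
    filter_upwards [hsmall] with h hh
    simp only [Set.mem_setOf_eq, eq_iff_iff]
    exact ⟨fun ⟨h1, _⟩ => h1, fun h1 => ⟨h1, (hmem h hh).1⟩⟩
  rw [nhdsWithin_eq_iff_eventuallyEq.mpr heq1] at hlim
  rw [nhdsWithin_eq_iff_eventuallyEq.mpr heq2]
  -- squeeze
  have hlo : Tendsto (fun h : ℝ => 2 * (dist (γ (t + h)) (γ (t - h)) / (2 * |h|)) - 1)
      (nhdsWithin 0 {h : ℝ | h ≠ 0}) (nhds 1) := by
    have := (hlim.const_mul 2).sub_const 1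
    norm_num at this ⊢
    exact this
  refine tendsto_of_tendsto_of_tendsto_of_le_of_le' hlo tendsto_const_nhds ?_ ?_
  · filter_upwards [eventually_nhdsWithin_of_eventually_nhds hsmall,
      self_mem_nhdsWithin] with h hh (hne : h ≠ 0)
    have habs : 0 < |h| := abs_pos.mpr hne
    obtain ⟨h1, h2⟩ := hmem h hh
    have htI : t ∈ I := interior_subset ht
    have hd1 : dist (γ t) (γ (t - h)) ≤ |h| := by
      have := hγ.dist_le_mul t htI (t - h) h2
      simpa [Real.dist_eq, abs_sub_comm] using this
    have htri : dist (γ (t + h)) (γ (t - h)) ≤ dist (γ (t + h)) (γ t) + |h| :=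
      (dist_triangle _ (γ t) _).trans (by linarith)
    have key : 2 * (dist (γ (t + h)) (γ (t - h)) / (2 * |h|)) =
        dist (γ (t + h)) (γ (t - h)) / |h| := by
      field_simp
    rw [key, sub_le_iff_le_add, div_le_iff₀ habs, add_mul, div_mul_cancel₀ _ habs.ne', one_mul]
    linarith
  · filter_upwards [eventually_nhdsWithin_of_eventually_nhds hsmall,
      self_mem_nhdsWithin] with h hh (hne : h ≠ 0)
    have habs : 0 < |h| := abs_pos.mpr hne
    obtain ⟨h1, _⟩ := hmem h hh
    have htI : t ∈ I := interior_subset ht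
    have hd : dist (γ (t + h)) (γ t) ≤ |h| := by
      have := hγ.dist_le_mul (t + h) h1 t htI
      simpa [Real.dist_eq] using this
    rw [div_le_one habs]
    exact hd
end
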